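/- arXiv:1012.2588 — 3 statements merged into one kernel-verified Lean document; each statement's English description precedes it below -/
import Mathlib

section
/- Let H be a separable Hilbert space and X a set of closed densely defined operators in H. Then there is a countable subset X₀ of X such that the von Neumann algebra generated by X₀ equals the von Neumann algebra generated by X. -/
open LinearPMap

variable {H : Type*} [NormedAddCommGroup H] [InnerProductSpace ℂ H] [CompleteSpace H]

/-- A bounded everywhere-defined operator `R` commutes with a (possibly unbounded)
operator `T`. -/
def CommutesWith (R : H →L[ℂ] H) (T : H →ₗ.[ℂ] H) : Prop :=
  ∀ ψ : T.domain, ∃ h : R ψ ∈ T.domain, R (T ψ) = T ⟨R ψ, h⟩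

/-- The commutant of a set of (possibly unbounded) operators. -/
def Commutant (X : Set (H →ₗ.[ℂ] H)) : Set (H →L[ℂ] H) :=
  {R | ∀ T ∈ X, CommutesWith R T}

/-- The von Neumann algebra `A(X)` generated by a set `X` of closed densely defined
operators: the bicommutant `(X ∪ X*)′′`, where the second commutant is the ordinary
centralizer inside `L(H)`. -/
def VNGen (X : Set (H →ₗ.[ℂ] H)) : Set (H →L[ℂ] H) :=
  Set.centralizer (Commutant (X ∪ (fun T : H →ₗ.[ℂ] H => T.adjoint) '' X))

section Aux

open Filter Topology

local notation "⟪" x ", " y "⟫" => @inner ℂ _ _ x y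

theorem my_adjoint_graph_mem_iff {T : H →ₗ.[ℂ] H} (hT : Dense (T.domain : Set H)) (p : H × H) :
    p ∈ T.adjoint.graph ↔ ∀ x : T.domain, ⟪p.2, (x : H)⟫ = ⟪p.1, T x⟫ := by
  constructor
  · intro hp x
    rw [LinearPMap.mem_graph_iff] at hp
    obtain ⟨y, hy1, hy2⟩ := hp
    rw [← hy1, ← hy2]
    exact LinearPMap.adjoint_isFormalAdjoint hT y x
  · intro hp
    have hmem : p.1 ∈ T.adjoint.domain :=
      LinearPMap.mem_adjoint_domain_of_exists p.1 ⟨p.2, fun x => hp x⟩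
    rw [LinearPMap.mem_graph_iff]
    exact ⟨⟨p.1, hmem⟩, rfl, LinearPMap.adjoint_apply_eq hT ⟨p.1, hmem⟩ hp⟩

theorem my_adjoint_isClosed {T : H →ₗ.[ℂ] H} (hT : Dense (T.domain : Set H)) :
    T.adjoint.IsClosed := by
  have hgr : (T.adjoint.graph : Set (H × H)) =
      ⋂ x : T.domain, {p : H × H | ⟪p.2, (x : H)⟫ = ⟪p.1, T x⟫} := by
    ext p
    simp only [Set.mem_iInter, Set.mem_setOf_eq, SetLike.mem_coe]
    exact my_adjoint_graph_mem_iff hT p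
  show _root_.IsClosed (T.adjoint.graph : Set (H × H))
  rw [hgr]
  exact isClosed_iInter fun x =>
    isClosed_eq (Continuous.inner continuous_snd continuous_const)
      (Continuous.inner continuous_fst continuous_const)

omit [CompleteSpace H] in
theorem my_tendsto_of_dense {u : ℕ → H} (hu : DenseRange u) {c : ℝ}
    {R : ℕ → H →L[ℂ] H} {S : H →L[ℂ] H}
    (hR : ∀ k, ‖R k‖ ≤ c) (hS : ‖S‖ ≤ c)
    (h : ∀ m, Tendsto (fun k => R k (u m)) atTop (𝓝 (S (u m))))
    (ψ : H) : Tendsto (fun k => R k ψ) atTop (𝓝 (S ψ)) := by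
  have hc0 : 0 ≤ c := le_trans (norm_nonneg _) hS
  rw [Metric.tendsto_atTop]
  intro ε hε
  obtain ⟨m, hm⟩ : ∃ m, dist ψ (u m) < ε / (4 * (c + 1)) :=
    hu.exists_dist_lt ψ (by positivity)
  have hm' : ‖ψ - u m‖ < ε / (4 * (c + 1)) := by rwa [← dist_eq_norm]
  obtain ⟨N, hN⟩ := (Metric.tendsto_atTop.mp (h m)) (ε / 2) (by positivity)
  refine ⟨N, fun k hk => ?_⟩
  have h1 : ‖R k ψ - R k (u m)‖ ≤ c * ‖ψ - u m‖ := by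
    calc ‖R k ψ - R k (u m)‖ = ‖R k (ψ - u m)‖ := by rw [_root_.map_sub]
    _ ≤ ‖R k‖ * ‖ψ - u m‖ := (R k).le_opNorm _
    _ ≤ c * ‖ψ - u m‖ := by gcongr; exact hR k
  have h3 : ‖S (u m) - S ψ‖ ≤ c * ‖ψ - u m‖ := by
    calc ‖S (u m) - S ψ‖ = ‖S (u m - ψ)‖ := by rw [_root_.map_sub]
    _ ≤ ‖S‖ * ‖u m - ψ‖ := S.le_opNorm _
    _ ≤ c * ‖ψ - u m‖ := by rw [norm_sub_rev]; gcongr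
  have h2 : ‖R k (u m) - S (u m)‖ < ε / 2 := by
    have := hN k hk; rwa [dist_eq_norm] at this
  have hcc : c * ‖ψ - u m‖ ≤ ε / 4 := by
    have : c * ‖ψ - u m‖ ≤ (c + 1) * (ε / (4 * (c + 1))) := by
      apply mul_le_mul (by linarith) hm'.le (norm_nonneg _) (by linarith)
    calc c * ‖ψ - u m‖ ≤ (c + 1) * (ε / (4 * (c + 1))) := this
    _ = ε / 4 := by field_simp
  calc dist (R k ψ) (S ψ) = ‖R k ψ - S ψ‖ := dist_eq_norm _ _
  _ ≤ ‖R k ψ - R k (u m)‖ + ‖R k (u m) - S (u m)‖ + ‖S (u m) - S ψ‖ := by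
      have := norm_sub_le_norm_sub_add_norm_sub (R k ψ) (R k (u m)) (S ψ)
      have h4 := norm_sub_le_norm_sub_add_norm_sub (R k (u m)) (S (u m)) (S ψ)
      linarith
  _ < ε := by linarith

omit [CompleteSpace H] in
theorem my_commutesWith_of_tendsto {T : H →ₗ.[ℂ] H} (hT : T.IsClosed)
    {R : ℕ → H →L[ℂ] H} {S : H →L[ℂ] H}
    (hconv : ∀ ψ : H, Tendsto (fun k => R k ψ) atTop (𝓝 (S ψ)))
    (hcomm : ∀ k, CommutesWith (R k) T) : CommutesWith S T := by
  intro ψ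
  have hmem : ∀ k, ((R k ψ : H), R k (T ψ)) ∈ T.graph := by
    intro k
    obtain ⟨h, he⟩ := hcomm k ψ
    rw [LinearPMap.mem_graph_iff]
    exact ⟨⟨R k ψ, h⟩, rfl, he.symm⟩
  have hlim : Tendsto (fun k => ((R k ψ : H), R k (T ψ))) atTop (𝓝 (S ψ, S (T ψ))) :=
    (hconv ψ).prodMk_nhds (hconv (T ψ))
  have hg : ((S ψ : H), S (T ψ)) ∈ T.graph :=
    hT.mem_of_tendsto hlim (Filter.Eventually.of_forall hmem)
  rw [LinearPMap.mem_graph_iff] at hg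
  obtain ⟨y, hy1, hy2⟩ := hg
  simp only [] at hy1 hy2
  have hmem2 : S ψ ∈ T.domain := by
    rw [show (S (ψ : H) : H) = (y : H) from hy1.symm]; exact y.2
  refine ⟨hmem2, ?_⟩
  have hyy : (⟨S ψ, hmem2⟩ : T.domain) = y := Subtype.ext (by simpa using hy1.symm)
  rw [hyy, hy2]

theorem my_key [TopologicalSpace.SeparableSpace H]
    (X : Set (H →ₗ.[ℂ] H))
    (hclosed : ∀ T ∈ X, T.IsClosed)
    (hdense : ∀ T ∈ X, Dense (T.domain : Set H))
    (u : ℕ → H) (hu : DenseRange u) (n : ℕ) :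
    ∃ c : Set X, c.Countable ∧
      ∀ R : H →L[ℂ] H, ‖R‖ ≤ (n : ℝ) →
        (∀ T ∈ c, CommutesWith R (T : H →ₗ.[ℂ] H) ∧ CommutesWith R (T : H →ₗ.[ℂ] H).adjoint) →
        ∀ T : X, CommutesWith R (T : H →ₗ.[ℂ] H) ∧ CommutesWith R (T : H →ₗ.[ℂ] H).adjoint := by
  classical
  let S := {R : H →L[ℂ] H // ‖R‖ ≤ (n : ℝ)}
  let j : S → (ℕ → H) := fun R m => R.1 (u m)
  haveI hsep : SecondCountableTopology H := UniformSpace.secondCountable_of_separable H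
  letI ts : TopologicalSpace S := TopologicalSpace.induced j inferInstance
  haveI : SecondCountableTopology S :=
    TopologicalSpace.secondCountableTopology_induced S (ℕ → H) j
  have hind : Topology.IsInducing j := ⟨rfl⟩
  haveI : TopologicalSpace.PseudoMetrizableSpace S := hind.pseudoMetrizableSpace
  have hcl : ∀ T' : H →ₗ.[ℂ] H, T'.IsClosed → IsClosed {R : S | CommutesWith R.1 T'} := by
    intro T' hT'
    refine IsSeqClosed.isClosed ?_
    intro x p hx hxp
    have hj : Tendsto (fun k => j (x k)) atTop (𝓝 (j p)) :=
      (hind.tendsto_nhds_iff).mp hxp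
    have h1 : ∀ m, Tendsto (fun k => (x k).1 (u m)) atTop (𝓝 (p.1 (u m))) := fun m =>
      tendsto_pi_nhds.mp hj m
    have h2 : ∀ ψ, Tendsto (fun k => (x k).1 ψ) atTop (𝓝 (p.1 ψ)) :=
      my_tendsto_of_dense hu (fun k => (x k).2) p.2 h1
    exact my_commutesWith_of_tendsto hT' h2 hx
  let O : X → Set S := fun T =>
    ({R : S | CommutesWith R.1 (T : H →ₗ.[ℂ] H)} ∩
      {R : S | CommutesWith R.1 (T : H →ₗ.[ℂ] H).adjoint})ᶜ
  have hO : ∀ T : X, IsOpen (O T) := fun T =>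
    (IsClosed.inter (hcl _ (hclosed T T.2)) (hcl _ (my_adjoint_isClosed (hdense T T.2)))).isOpen_compl
  obtain ⟨c, hcc, hc⟩ := TopologicalSpace.isOpen_iUnion_countable O hO
  refine ⟨c, hcc, ?_⟩
  intro R hR hPc T
  by_contra hPT
  have hmem : (⟨R, hR⟩ : S) ∈ ⋃ i, O i :=
    Set.mem_iUnion.mpr ⟨T, fun h => hPT ⟨h.1, h.2⟩⟩
  rw [← hc] at hmem
  obtain ⟨T', hT'c, hT'⟩ := Set.mem_iUnion₂.mp hmem
  exact hT' ⟨(hPc T' hT'c).1, (hPc T' hT'c).2⟩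

theorem my_mem_commutant_iff (Y : Set (H →ₗ.[ℂ] H)) (R : H →L[ℂ] H) :
    R ∈ Commutant (Y ∪ (fun T : H →ₗ.[ℂ] H => T.adjoint) '' Y) ↔
      ∀ T ∈ Y, CommutesWith R T ∧ CommutesWith R T.adjoint := by
  constructor
  · intro h T hT
    exact ⟨h T (Or.inl hT), h T.adjoint (Or.inr ⟨T, hT, rfl⟩)⟩
  · rintro h T' (hT' | ⟨T, hT, rfl⟩)
    · exact (h T' hT').1
    · exact (h T hT).2

end Aux

/-- In a separable Hilbert space, every set of closed densely defined operators has a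
countable subset generating the same von Neumann algebra. -/
theorem exists_countable_subset_vNGen_eq
    [TopologicalSpace.SeparableSpace H]
    (X : Set (H →ₗ.[ℂ] H))
    (hclosed : ∀ T ∈ X, T.IsClosed)
    (hdense : ∀ T ∈ X, Dense (T.domain : Set H)) :
    ∃ X₀ ⊆ X, X₀.Countable ∧ VNGen X₀ = VNGen X := by
  haveI : Nonempty H := ⟨0⟩
  obtain ⟨u, hu⟩ := TopologicalSpace.exists_dense_seq H
  choose c hcc hc using my_key X hclosed hdense u hu
  have hsub : (⋃ n, Subtype.val '' c n) ⊆ X := by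
    refine Set.iUnion_subset fun n => ?_
    rintro T ⟨T', _, rfl⟩
    exact T'.2
  refine ⟨⋃ n, Subtype.val '' c n, hsub, Set.countable_iUnion fun n => (hcc n).image _, ?_⟩
  suffices hC : Commutant ((⋃ n, Subtype.val '' c n) ∪
      (fun T : H →ₗ.[ℂ] H => T.adjoint) '' (⋃ n, Subtype.val '' c n)) =
      Commutant (X ∪ (fun T : H →ₗ.[ℂ] H => T.adjoint) '' X) by
    rw [VNGen, VNGen, hC]
  ext R
  rw [my_mem_commutant_iff, my_mem_commutant_iff]
  constructor
  · intro h T hT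
    refine hc (⌈‖R‖⌉₊) R (Nat.le_ceil _) ?_ ⟨T, hT⟩
    intro T' hT'
    exact h T'.1 (Set.mem_iUnion.mpr ⟨⌈‖R‖⌉₊, ⟨T', hT', rfl⟩⟩)
  · intro h T hT
    exact h T (hsub hT)
end

section
/- Let S be a Polish space, H a Hilbert space, E a spectral measure for (S,H), and U a bounded operator on H commuting with the spectral integral J^E_f for every continuous complex function f on S. Then U commutes with E(A) for every Borel set A ⊂ S. -/
open LinearPMap MeasureTheory

variable {H : Type*} [NormedAddCommGroup H] [InnerProductSpace ℂ H] [CompleteSpace H]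

/-- A projection-valued spectral measure on a measurable space `S`, together with the
associated scalar measures `E_ψ(A) = ⟪E(A)ψ, ψ⟫ = ‖E(A)ψ‖²`. -/
structure SpectralMeasure (S : Type*) [MeasurableSpace S] (H : Type*)
    [NormedAddCommGroup H] [InnerProductSpace ℂ H] [CompleteSpace H] where
  proj : Set S → H →L[ℂ] H
  idem : ∀ A : Set S, MeasurableSet A → proj A * proj A = proj A
  selfadj : ∀ A : Set S, MeasurableSet A → IsSelfAdjoint (proj A)
  proj_univ : proj Set.univ = 1
  meas : H → Measure S
  meas_eq : ∀ (ψ : H) (A : Set S), MeasurableSet A →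
    meas ψ A = (‖proj A ψ‖₊ : ENNReal) ^ 2

/-- `T = J^E_f`, the spectral integral of `f` with respect to `E`, characterized by
its domain and quadratic form. -/
def IsSpectralIntegralOf {S : Type*} [MeasurableSpace S]
    (E : SpectralMeasure S H) (f : S → ℂ) (T : H →ₗ.[ℂ] H) : Prop :=
  (∀ ψ : H, ψ ∈ T.domain ↔ Integrable (fun s => ‖f s‖ ^ 2) (E.meas ψ)) ∧
  ∀ ψ : T.domain, (inner ℂ (ψ : H) (T ψ) : ℂ) = ∫ s, f s ∂(E.meas ψ)

open MeasureTheory NNReal Filter Topology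
set_option linter.unusedSectionVars false
set_option maxHeartbeats 1000000

namespace SpecAux



local notation "⟪" x ", " y "⟫" => @inner ℂ _ _ x y

variable {S : Type*} [MeasurableSpace S] (E : SpectralMeasure S H)

lemma meas_eq' (ψ : H) {A : Set S} (hA : MeasurableSet A) :
    E.meas ψ A = ENNReal.ofReal (‖E.proj A ψ‖ ^ 2) := by
  rw [E.meas_eq ψ A hA, ← enorm_eq_nnnorm, ← ofReal_norm, ← ENNReal.ofReal_pow (norm_nonneg _)]

lemma meas_univ (ψ : H) : E.meas ψ Set.univ = ENNReal.ofReal (‖ψ‖ ^ 2) := by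
  rw [meas_eq' E ψ MeasurableSet.univ, E.proj_univ]; rfl

instance meas_finite (ψ : H) : IsFiniteMeasure (E.meas ψ) :=
  ⟨by rw [meas_univ]; exact ENNReal.ofReal_lt_top⟩

/-- real vector identity 1 -/
private lemma rid1 (u v w : H) :
    ‖u + (v + w)‖ ^ 2 + (‖u - v‖ ^ 2 + ‖u - w‖ ^ 2) =
      ‖u - (v + w)‖ ^ 2 + (‖u + v‖ ^ 2 + ‖u + w‖ ^ 2) := by
  simp only [@norm_add_sq ℂ, @norm_sub_sq ℂ, inner_add_right, _root_.map_add]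
  ring

/-- real vector identity 2 (real-scalar mixing) -/
private lemma rid2 (u v : H) (r : ℝ) :
    ‖u + (r : ℂ) • v‖ ^ 2 + r * ‖u - v‖ ^ 2 =
      ‖u - (r : ℂ) • v‖ ^ 2 + r * ‖u + v‖ ^ 2 := by
  have hre : ∀ z : ℂ, RCLike.re ((r : ℂ) * z) = r * RCLike.re z := fun z => by
    simpa using RCLike.re_ofReal_mul (K := ℂ) r z
  have hn : ‖((r : ℝ) : ℂ)‖ ^ 2 = r ^ 2 := by
    rw [Complex.norm_real]; exact sq_abs r ▸ (by rw [Real.norm_eq_abs, sq_abs])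
  simp only [@norm_add_sq ℂ, @norm_sub_sq ℂ, inner_smul_right, hre, norm_smul, mul_pow, hn]
  ring

lemma meas_add3 (x y z : H) :
    E.meas (x + (y + z)) + (E.meas (x - y) + E.meas (x - z)) =
      E.meas (x - (y + z)) + (E.meas (x + y) + E.meas (x + z)) := by
  ext A hA
  simp only [Measure.add_apply, meas_eq' E _ hA]
  rw [← ENNReal.ofReal_add (by positivity) (by positivity),
      ← ENNReal.ofReal_add (by positivity) (by positivity),
      ← ENNReal.ofReal_add (by positivity) (by positivity),
      ← ENNReal.ofReal_add (by positivity) (by positivity)]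
  refine congrArg _ ?_
  simpa only [_root_.map_add, _root_.map_sub] using rid1 (E.proj A x) (E.proj A y) (E.proj A z)

lemma meas_smul_mix (x y : H) (r : ℝ≥0) :
    E.meas (x + ((r : ℝ) : ℂ) • y) + (r : ENNReal) • E.meas (x - y) =
      E.meas (x - ((r : ℝ) : ℂ) • y) + (r : ENNReal) • E.meas (x + y) := by
  ext A hA
  simp only [Measure.add_apply, Measure.smul_apply, smul_eq_mul, meas_eq' E _ hA]
  rw [show ((r : ENNReal)) = ENNReal.ofReal (r : ℝ) by simp,
      ← ENNReal.ofReal_mul r.coe_nonneg, ← ENNReal.ofReal_mul r.coe_nonneg,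
      ← ENNReal.ofReal_add (by positivity) (by positivity),
      ← ENNReal.ofReal_add (by positivity) (by positivity)]
  refine congrArg _ ?_
  simpa only [_root_.map_add, _root_.map_sub, _root_.map_smul] using rid2 (E.proj A x) (E.proj A y) (r : ℝ)

lemma meas_csmul (c : ℂ) (z : H) :
    E.meas (c • z) = (‖c‖₊ ^ 2 : ℝ≥0) • E.meas z := by
  ext A hA
  simp only [Measure.smul_apply, smul_eq_mul, E.meas_eq _ _ hA, _root_.map_smul, nnnorm_smul, ENNReal.smul_def]
  push_cast
  ring

lemma meas_zero : E.meas (0 : H) = 0 := by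
  ext A hA
  simp [E.meas_eq _ _ hA]

lemma meas_neg (z : H) : E.meas (-z) = E.meas z := by
  have h := meas_csmul E (-1 : ℂ) z
  simpa using h

lemma meas_I_smul (z : H) : E.meas ((Complex.I : ℂ) • z) = E.meas z := by
  have h := meas_csmul E (Complex.I) z
  simpa using h


/-! ### The quadratic form and sesquilinear form of a bounded function -/

variable (g : S → ℝ)

noncomputable def qf (z : H) : ℝ := ∫ s, g s ∂(E.meas z)

noncomputable def Pf (x y : H) : ℝ := qf E g (x + y) - qf E g (x - y)

noncomputable def Bf (x y : H) : ℂ :=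
  ((Pf E g x y : ℂ) + (Pf E g x (-(Complex.I • y)) : ℂ) * Complex.I) / 4

variable (hgi : ∀ z : H, Integrable g (E.meas z))

section qlemmas
include hgi

lemma q_add3 (x y z : H) :
    qf E g (x + (y + z)) + (qf E g (x - y) + qf E g (x - z)) =
      qf E g (x - (y + z)) + (qf E g (x + y) + qf E g (x + z)) := by
  have h := congrArg (fun μ : Measure S => ∫ s, g s ∂μ) (meas_add3 E x y z)
  simpa only [integral_add_measure, hgi, Integrable.add_measure, qf,
    integral_add_measure (hgi _) ((hgi _).add_measure (hgi _)),
    integral_add_measure (hgi _) (hgi _)] using h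

lemma q_smul_mix (x y : H) (r : ℝ≥0) :
    qf E g (x + ((r : ℝ) : ℂ) • y) + r * qf E g (x - y) =
      qf E g (x - ((r : ℝ) : ℂ) • y) + r * qf E g (x + y) := by
  have h := congrArg (fun μ : Measure S => ∫ s, g s ∂μ) (meas_smul_mix E x y r)
  simp only [integral_add_measure (hgi _) ((hgi _).smul_measure (by simp : (r : ENNReal) ≠ ⊤)),
    integral_smul_measure, ENNReal.coe_toReal, smul_eq_mul] at h
  simpa only [qf] using h

omit hgi in
lemma q_csmul (c : ℂ) (z : H) : qf E g (c • z) = ‖c‖ ^ 2 * qf E g z := by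
  have h := congrArg (fun μ : Measure S => ∫ s, g s ∂μ) (meas_csmul E c z)
  simp only [qf] at h ⊢
  rw [h, show ((‖c‖₊ ^ 2 : ℝ≥0) • E.meas z) = ((‖c‖₊ ^ 2 : ℝ≥0) : ENNReal) • E.meas z from rfl,
    integral_smul_measure]
  simp [smul_eq_mul]

omit hgi in
lemma q_zero : qf E g (0 : H) = 0 := by
  simp [qf, meas_zero]

omit hgi in
lemma q_neg (z : H) : qf E g (-z) = qf E g z := by
  simp [qf, meas_neg]

omit hgi in
lemma q_I (z : H) : qf E g (Complex.I • z) = qf E g z := by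
  simp [qf, meas_I_smul]

/-! ### P lemmas -/

omit hgi in
lemma P_symm (x y : H) : Pf E g x y = Pf E g y x := by
  simp only [Pf, add_comm x y]
  rw [show x - y = -(y - x) from (neg_sub y x).symm, q_neg]

lemma P_add_right (x y z : H) : Pf E g x (y + z) = Pf E g x y + Pf E g x z := by
  have h := q_add3 E g hgi x y z
  simp only [Pf]; linarith

lemma P_add_left (x y z : H) : Pf E g (x + y) z = Pf E g x z + Pf E g y z := by
  rw [P_symm E g, P_add_right E g hgi, P_symm E g z x, P_symm E g z y]

lemma P_nnreal_right (x y : H) (r : ℝ≥0) :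
    Pf E g x (((r : ℝ) : ℂ) • y) = r * Pf E g x y := by
  have h := q_smul_mix E g hgi x y r
  simp only [Pf]; linarith

omit hgi in
lemma P_neg_right (x y : H) : Pf E g x (-y) = -Pf E g x y := by
  simp only [Pf, ← sub_eq_add_neg, sub_neg_eq_add]
  ring

lemma P_real_right (x y : H) (r : ℝ) : Pf E g x ((r : ℂ) • y) = r * Pf E g x y := by
  rcases le_or_gt 0 r with hr | hr
  · lift r to ℝ≥0 using hr
    exact P_nnreal_right E g hgi x y r
  · have : ((r : ℂ)) • y = -((((-r : ℝ) : ℂ)) • y) := by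
      push_cast; rw [← neg_smul]; ring_nf
    rw [this, P_neg_right]
    have h2 := P_nnreal_right E g hgi x y ⟨-r, by linarith⟩
    change Pf E g x (((-r : ℝ) : ℂ) • y) = (-r) * Pf E g x y at h2
    rw [h2]
    ring

lemma P_real_left (x y : H) (r : ℝ) : Pf E g ((r : ℂ) • x) y = r * Pf E g x y := by
  rw [P_symm E g, P_real_right E g hgi, P_symm E g]

lemma P_neg_left (x y : H) : Pf E g (-x) y = -Pf E g x y := by
  rw [P_symm E g, P_neg_right E g, P_symm E g]

omit hgi in
lemma P_I_both (x y : H) : Pf E g (Complex.I • x) (Complex.I • y) = Pf E g x y := by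
  simp only [Pf, ← smul_add, ← smul_sub, q_I]

omit hgi in
lemma P_I_left (x y : H) : Pf E g (Complex.I • x) y = Pf E g x (-(Complex.I • y)) := by
  have h1 : Complex.I • x + y = Complex.I • (x + -(Complex.I • y)) := by
    rw [smul_add, smul_neg, smul_smul, Complex.I_mul_I, neg_smul, one_smul, neg_neg]
  have h2 : Complex.I • x - y = Complex.I • (x - -(Complex.I • y)) := by
    rw [smul_sub, smul_neg, smul_smul, Complex.I_mul_I, neg_smul, one_smul, neg_neg, sub_eq_add_neg]
  simp only [Pf, h1, h2, q_I]

/-! ### B lemmas -/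

lemma B_add_right (x y z : H) : Bf E g x (y + z) = Bf E g x y + Bf E g x z := by
  have h1 : -(Complex.I • (y + z)) = -(Complex.I • y) + -(Complex.I • z) := by
    rw [smul_add, neg_add]
  simp only [Bf, P_add_right E g hgi, h1]
  push_cast
  ring

lemma B_add_left (x y z : H) : Bf E g (x + y) z = Bf E g x z + Bf E g y z := by
  simp only [Bf, P_add_left E g hgi]
  push_cast
  ring

lemma B_real_right (x y : H) (r : ℝ) : Bf E g x ((r : ℂ) • y) = r * Bf E g x y := by
  have h1 : -(Complex.I • ((r : ℂ) • y)) = (r : ℂ) • (-(Complex.I • y)) := by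
    rw [smul_comm, smul_neg]
  rw [Bf, h1, P_real_right E g hgi, P_real_right E g hgi, Bf]
  push_cast
  ring

lemma B_real_left (x y : H) (r : ℝ) : Bf E g ((r : ℂ) • x) y = r * Bf E g x y := by
  have h1 : Pf E g ((r : ℂ) • x) (-(Complex.I • y)) = r * Pf E g x (-(Complex.I • y)) :=
    P_real_left E g hgi _ _ r
  rw [Bf, P_real_left E g hgi, h1, Bf]
  push_cast
  ring

lemma B_I_right (x y : H) : Bf E g x (Complex.I • y) = Complex.I * Bf E g x y := by
  have h1 : Pf E g x (Complex.I • y) = -Pf E g x (-(Complex.I • y)) := by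
    rw [P_neg_right E g, neg_neg]
  have h2 : -(Complex.I • (Complex.I • y)) = y := by
    simp [smul_smul, Complex.I_mul_I]
  rw [Bf, h1, h2, Bf]
  have hI : (Complex.I : ℂ) * Complex.I = -1 := Complex.I_mul_I
  push_cast
  linear_combination (-((Pf E g x (-(Complex.I • y)) : ℂ)) / 4) * hI

lemma B_I_left (x y : H) : Bf E g (Complex.I • x) y = -Complex.I * Bf E g x y := by
  have h1 : Pf E g (Complex.I • x) (-(Complex.I • y)) = -Pf E g x y := by
    rw [P_neg_right E g, P_I_both E g]
  rw [Bf, h1, P_I_left E g, Bf]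
  have hI : (Complex.I : ℂ) * Complex.I = -1 := Complex.I_mul_I
  push_cast
  linear_combination ((Pf E g x (-(Complex.I • y)) : ℂ) / 4) * hI

lemma B_smul_right (x y : H) (c : ℂ) : Bf E g x (c • y) = c * Bf E g x y := by
  have hdec : c • y = ((c.re : ℂ)) • y + ((c.im : ℂ)) • (Complex.I • y) := by
    rw [smul_smul, ← add_smul, Complex.re_add_im]
  rw [hdec, B_add_right E g hgi, B_real_right E g hgi, B_real_right E g hgi,
    B_I_right E g hgi]
  have hc : (c.re : ℂ) + (c.im : ℂ) * Complex.I = c := Complex.re_add_im c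
  linear_combination (Bf E g x y) * hc

lemma B_smul_left (x y : H) (c : ℂ) : Bf E g (c • x) y = (starRingEnd ℂ) c * Bf E g x y := by
  have hdec : c • x = ((c.re : ℂ)) • x + ((c.im : ℂ)) • (Complex.I • x) := by
    rw [smul_smul, ← add_smul, Complex.re_add_im]
  rw [hdec, B_add_left E g hgi, B_real_left E g hgi, B_real_left E g hgi,
    B_I_left E g hgi]
  have hc : (starRingEnd ℂ) c = (c.re : ℂ) - (c.im : ℂ) * Complex.I := by
    apply Complex.ext <;> simp
  linear_combination (-(Bf E g x y)) * hc

omit hgi in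
lemma B_zero_right (x : H) : Bf E g x 0 = 0 := by
  simp [Bf, Pf, smul_zero, neg_zero]

omit hgi in
lemma B_zero_left (y : H) : Bf E g 0 y = 0 := by
  simp only [Bf, Pf, zero_add, zero_sub, q_neg, sub_self]
  norm_num

/-! ### bounds -/

variable (hg0 : ∀ s, 0 ≤ g s) (hg1 : ∀ s, g s ≤ 1)

omit hgi in
include hg0 in
lemma q_nonneg (z : H) : 0 ≤ qf E g z :=
  integral_nonneg hg0

include hg0 hg1 in
lemma q_le (z : H) : qf E g z ≤ ‖z‖ ^ 2 := by
  have h1 : qf E g z ≤ ∫ _, (1 : ℝ) ∂(E.meas z) :=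
    integral_mono (hgi z) (integrable_const 1) hg1
  have h2 : ∫ _, (1 : ℝ) ∂(E.meas z) = (E.meas z Set.univ).toReal := by
    simp [integral_const, Measure.real]
  rw [h2, meas_univ] at h1
  rwa [ENNReal.toReal_ofReal (by positivity)] at h1

include hg0 hg1 in
lemma P_abs_le (x y : H) : |Pf E g x y| ≤ 2 * ‖x‖ ^ 2 + 2 * ‖y‖ ^ 2 := by
  have h1 := q_nonneg E g hg0 (x + y)
  have h2 := q_nonneg E g hg0 (x - y)
  have h3 := q_le E g hgi hg0 hg1 (x + y)
  have h4 := q_le E g hgi hg0 hg1 (x - y)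
  have hp : ‖x + y‖ ^ 2 + ‖x - y‖ ^ 2 = 2 * ‖x‖ ^ 2 + 2 * ‖y‖ ^ 2 := by
    have := parallelogram_law_with_norm ℂ x y
    nlinarith [this]
  rw [Pf, abs_sub_le_iff]
  constructor <;> nlinarith

include hg0 hg1 in
lemma B_abs_le (x y : H) : ‖Bf E g x y‖ ≤ ‖x‖ ^ 2 + ‖y‖ ^ 2 := by
  have h1 := P_abs_le E g hgi hg0 hg1 x y
  have h2 := P_abs_le E g hgi hg0 hg1 x (-(Complex.I • y))
  have hn : ‖-(Complex.I • y)‖ = ‖y‖ := by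
    rw [norm_neg, norm_smul, Complex.norm_I, one_mul]
  rw [hn] at h2
  have : ‖Bf E g x y‖ ≤ (|Pf E g x y| + |Pf E g x (-(Complex.I • y))|) / 4 := by
    rw [Bf]
    calc ‖((Pf E g x y : ℂ) + (Pf E g x (-(Complex.I • y)) : ℂ) * Complex.I) / 4‖
        = ‖(Pf E g x y : ℂ) + (Pf E g x (-(Complex.I • y)) : ℂ) * Complex.I‖ / 4 := by
          rw [norm_div]; norm_num
      _ ≤ (‖(Pf E g x y : ℂ)‖ + ‖(Pf E g x (-(Complex.I • y)) : ℂ) * Complex.I‖) / 4 := by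
          gcongr; exact norm_add_le _ _
      _ = (|Pf E g x y| + |Pf E g x (-(Complex.I • y))|) / 4 := by
          rw [norm_mul, Complex.norm_I, mul_one, Complex.norm_real, Complex.norm_real]
          rfl
  linarith

include hg0 hg1 in
lemma B_abs_le' (x y : H) : ‖Bf E g x y‖ ≤ 2 * ‖x‖ * ‖y‖ := by
  rcases eq_or_ne x 0 with rfl | hx
  · simp [B_zero_left]
  rcases eq_or_ne y 0 with rfl | hy
  · simp [B_zero_right]
  have hxp : (0 : ℝ) < ‖x‖ := norm_pos_iff.mpr hx
  have hyp : (0 : ℝ) < ‖y‖ := norm_pos_iff.mpr hy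
  set t : ℝ := ‖y‖ / ‖x‖ with ht
  have htp : 0 < t := div_pos hyp hxp
  have h1 : Bf E g ((t : ℂ) • x) y = t * Bf E g x y := B_real_left E g hgi x y t
  have h2 := B_abs_le E g hgi hg0 hg1 ((t : ℂ) • x) y
  rw [h1] at h2
  have h3 : ‖((t : ℂ)) • x‖ ^ 2 = t ^ 2 * ‖x‖ ^ 2 := by
    rw [norm_smul, Complex.norm_real, Real.norm_eq_abs, abs_of_pos htp, mul_pow]
  rw [h3, norm_mul, Complex.norm_real, Real.norm_eq_abs, abs_of_pos htp] at h2
  have h4 : t ^ 2 * ‖x‖ ^ 2 = ‖y‖ ^ 2 := by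
    rw [ht, div_pow, div_mul_cancel₀ _ (pow_ne_zero 2 hxp.ne')]
  rw [h4] at h2
  have h7 : t * ‖x‖ = ‖y‖ := by rw [ht, div_mul_cancel₀ _ hxp.ne']
  nlinarith [h2, h7, htp, hxp, hyp, norm_nonneg (Bf E g x y)]

/-! ### diagonal value -/

include hgi in
lemma B_diag (ψ : H) : Bf E g ψ ψ = (qf E g ψ : ℂ) := by
  have h1 : Pf E g ψ ψ = 4 * qf E g ψ := by
    have h2 : ψ + ψ = ((2 : ℝ) : ℂ) • ψ := by
      push_cast
      rw [two_smul]
    rw [Pf, h2, sub_self, q_zero, q_csmul]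
    norm_num
  have h3 : Pf E g ψ (-(Complex.I • ψ)) = 0 := by
    have ha : ψ + -(Complex.I • ψ) = ((1 : ℂ) - Complex.I) • ψ := by
      rw [sub_smul, one_smul, sub_eq_add_neg]
    have hb : ψ - -(Complex.I • ψ) = ((1 : ℂ) + Complex.I) • ψ := by
      rw [add_smul, one_smul, sub_neg_eq_add]
    rw [Pf, ha, hb, q_csmul, q_csmul]
    have : ‖(1 : ℂ) - Complex.I‖ = ‖(1 : ℂ) + Complex.I‖ := by
      rw [Complex.norm_def, Complex.norm_def]
      simp [Complex.normSq_apply]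
    rw [this]
    ring
  rw [Bf, h1, h3]
  push_cast
  ring

/-! ### the operator -/

include hgi hg0 hg1 in
lemma exists_T : ∃ T : H →ₗ[ℂ] H, ∀ x y : H, ⟪x, T y⟫ = Bf E g x y := by
  classical
  have hL : ∀ y : H, ∃ w : H, ∀ x : H, ⟪x, w⟫ = Bf E g x y := by
    intro y
    let L : H →ₗ[ℂ] ℂ :=
      { toFun := fun x => (starRingEnd ℂ) (Bf E g x y)
        map_add' := fun a b => by
          simp only [B_add_left E g hgi, _root_.map_add]
        map_smul' := fun c a => by
          simp only [RingHom.id_apply, smul_eq_mul, B_smul_left E g hgi, map_mul,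
            Complex.conj_conj] }
    have hLb : ∀ x : H, ‖L x‖ ≤ 2 * ‖y‖ * ‖x‖ := fun x => by
      have he : ‖L x‖ = ‖Bf E g x y‖ := RCLike.norm_conj _
      rw [he]
      calc ‖Bf E g x y‖ ≤ 2 * ‖x‖ * ‖y‖ := B_abs_le' E g hgi hg0 hg1 x y
        _ = 2 * ‖y‖ * ‖x‖ := by ring
    let Lc : H →L[ℂ] ℂ := LinearMap.mkContinuous L (2 * ‖y‖) hLb
    refine ⟨(InnerProductSpace.toDual ℂ H).symm Lc, fun x => ?_⟩
    have h1 : ⟪(InnerProductSpace.toDual ℂ H).symm Lc, x⟫ = Lc x :=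
      InnerProductSpace.toDual_symm_apply
    have h2 : Lc x = (starRingEnd ℂ) (Bf E g x y) := rfl
    rw [← inner_conj_symm, h1, h2, Complex.conj_conj]
  choose W hW using hL
  refine ⟨{ toFun := W, map_add' := ?_, map_smul' := ?_ }, fun x y => hW y x⟩
  · intro a b
    refine ext_inner_left ℂ fun v => ?_
    rw [hW, inner_add_right, hW, hW, B_add_right E g hgi]
  · intro c a
    refine ext_inner_left ℂ fun v => ?_
    rw [hW, RingHom.id_apply, inner_smul_right, hW, B_smul_right E g hgi]

end qlemmas


/-! ### generalities on the projections -/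

lemma proj_apply_self {A : Set S} (hA : MeasurableSet A) (y : H) :
    E.proj A (E.proj A y) = E.proj A y := by
  have h := congrArg (fun L : H →L[ℂ] H => L y) (E.idem A hA)
  simpa using h

lemma inner_proj_eq {A : Set S} (hA : MeasurableSet A) (x y : H) :
    ⟪x, E.proj A y⟫ = ⟪E.proj A x, E.proj A y⟫ := by
  have hadj : ContinuousLinearMap.adjoint (E.proj A) = E.proj A :=
    ContinuousLinearMap.isSelfAdjoint_iff'.mp (E.selfadj A hA)
  conv_rhs => rw [show E.proj A x = (ContinuousLinearMap.adjoint (E.proj A)) x by rw [hadj]]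
  rw [ContinuousLinearMap.adjoint_inner_left, proj_apply_self E hA]

lemma inner_self_proj {A : Set S} (hA : MeasurableSet A) (ψ : H) :
    ⟪ψ, E.proj A ψ⟫ = (((E.meas ψ A).toReal : ℝ) : ℂ) := by
  rw [inner_proj_eq E hA, inner_self_eq_norm_sq_to_K, meas_eq' E ψ hA,
    ENNReal.toReal_ofReal (by positivity)]
  push_cast
  rfl

lemma op_eq_of_inner (A B : H →L[ℂ] H) (h : ∀ ψ : H, ⟪ψ, A ψ⟫ = ⟪ψ, B ψ⟫) : A = B := by
  have h0 : ∀ x : H, ⟪((A : H →ₗ[ℂ] H) - (B : H →ₗ[ℂ] H)) x, x⟫ = 0 := by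
    intro x
    have h1 : ⟪A x, x⟫ = ⟪B x, x⟫ := by
      have h2 := congrArg (starRingEnd ℂ) (h x)
      rwa [inner_conj_symm, inner_conj_symm] at h2
    simp only [LinearMap.sub_apply, ContinuousLinearMap.coe_coe, inner_sub_left, h1, sub_self]
  have h2 := (inner_map_self_eq_zero _).mp h0
  ext x
  have h3 := congrArg (fun L : H →ₗ[ℂ] H => L x) h2
  simp only [LinearMap.sub_apply, ContinuousLinearMap.coe_coe, LinearMap.zero_apply] at h3
  exact sub_eq_zero.mp h3

lemma proj_empty : E.proj (∅ : Set S) = 0 := by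
  apply op_eq_of_inner
  intro ψ
  rw [inner_self_proj E MeasurableSet.empty]
  simp

lemma proj_compl {A : Set S} (hA : MeasurableSet A) :
    E.proj Aᶜ = 1 - E.proj A := by
  apply op_eq_of_inner
  intro ψ
  rw [inner_self_proj E hA.compl]
  have hμ : E.meas ψ Aᶜ = E.meas ψ Set.univ - E.meas ψ A := measure_compl hA (measure_ne_top _ _)
  have hle : E.meas ψ A ≤ E.meas ψ Set.univ := measure_mono (Set.subset_univ A)
  rw [hμ, ENNReal.toReal_sub_of_le hle (measure_ne_top _ _)]
  have hu : (E.meas ψ Set.univ).toReal = ‖ψ‖ ^ 2 := by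
    rw [meas_univ, ENNReal.toReal_ofReal (by positivity)]
  rw [hu]
  have : ⟪ψ, (1 - E.proj A) ψ⟫ = ⟪ψ, ψ⟫ - ⟪ψ, E.proj A ψ⟫ := by
    simp [inner_sub_right]
  rw [this, inner_self_eq_norm_sq_to_K, inner_self_proj E hA]
  push_cast
  norm_num

/-- Polarization: the matrix coefficient of a spectral projection via the scalar measures. -/
lemma inner_proj_polar {A : Set S} (hA : MeasurableSet A) (x y : H) :
    ⟪x, E.proj A y⟫ =
      ((((E.meas (x + y) A).toReal : ℂ) - ((E.meas (x - y) A).toReal : ℂ)) +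
        ((((E.meas (x + -(Complex.I • y)) A).toReal : ℂ)) -
          ((E.meas (x - -(Complex.I • y)) A).toReal : ℂ)) * Complex.I) / 4 := by
  rw [inner_proj_eq E hA]
  have hpol := inner_eq_sum_norm_sq_div_four (𝕜 := ℂ) (E.proj A x) (E.proj A y)
  have hIK : (RCLike.I : ℂ) = Complex.I := rfl
  rw [hpol, hIK]
  have hm : ∀ z : H, (E.meas z A).toReal = ‖E.proj A z‖ ^ 2 := fun z => by
    rw [meas_eq' E z hA, ENNReal.toReal_ofReal (by positivity)]
  have e1 : E.proj A x + E.proj A y = E.proj A (x + y) := (_root_.map_add _ _ _).symm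
  have e2 : E.proj A x - E.proj A y = E.proj A (x - y) := (_root_.map_sub _ _ _).symm
  have e3 : E.proj A x - Complex.I • E.proj A y = E.proj A (x - -(-(Complex.I • y))) := by
    rw [neg_neg, _root_.map_sub, _root_.map_smul]
  have e4 : E.proj A x + Complex.I • E.proj A y = E.proj A (x - -(Complex.I • y)) := by
    rw [_root_.map_sub, _root_.map_neg, _root_.map_smul, sub_neg_eq_add]
  rw [e1, e2, e4]
  rw [show E.proj A x - Complex.I • E.proj A y = E.proj A (x + -(Complex.I • y)) by
    rw [_root_.map_add, _root_.map_neg, _root_.map_smul, ← sub_eq_add_neg]]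
  have hcast : ∀ r : ℝ, (RCLike.ofReal r : ℂ) = Complex.ofReal r := fun _ => rfl
  simp only [hm, hcast]
  push_cast
  ring


/-! ### countable additivity at the level of matrix coefficients -/

lemma hasSum_meas_toReal (z : H) (f : ℕ → Set S) (hd : Pairwise (Function.onFun Disjoint f))
    (hm : ∀ i, MeasurableSet (f i)) :
    HasSum (fun n => ((E.meas z (f n)).toReal : ℂ)) (((E.meas z (⋃ i, f i)).toReal : ℂ)) := by
  rw [Complex.hasSum_ofReal]
  have h1 : E.meas z (⋃ i, f i) = ∑' i, E.meas z (f i) := measure_iUnion hd hm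
  have h2 : (∑' i, E.meas z (f i)) ≠ ⊤ := by rw [← h1]; exact measure_ne_top _ _
  have h3 := ENNReal.hasSum_toReal h2
  rwa [← ENNReal.tsum_toReal_eq (fun i => measure_ne_top _ _), ← h1] at h3

lemma hasSum_inner_proj (x y : H) (f : ℕ → Set S) (hd : Pairwise (Function.onFun Disjoint f))
    (hm : ∀ i, MeasurableSet (f i)) :
    HasSum (fun n => ⟪x, E.proj (f n) y⟫) ⟪x, E.proj (⋃ i, f i) y⟫ := by
  have key := fun z : H => hasSum_meas_toReal E z f hd hm
  have h := ((((key (x + y)).sub (key (x - y))).add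
    (((key (x + -(Complex.I • y))).sub (key (x - -(Complex.I • y)))).mul_right
      Complex.I)).div_const 4)
  have e : (fun n => ⟪x, E.proj (f n) y⟫) = fun n =>
      ((((E.meas (x + y) (f n)).toReal : ℂ) - ((E.meas (x - y) (f n)).toReal : ℂ)) +
        ((((E.meas (x + -(Complex.I • y)) (f n)).toReal : ℂ)) -
          ((E.meas (x - -(Complex.I • y)) (f n)).toReal : ℂ)) * Complex.I) / 4 :=
    funext fun n => inner_proj_polar E (hm n) x y
  rw [e, inner_proj_polar E (MeasurableSet.iUnion hm) x y]
  exact h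

/-! ### commutation steps -/

lemma comm_compl (U : H →L[ℂ] H) {A : Set S} (hA : MeasurableSet A)
    (h : U * E.proj A = E.proj A * U) : U * E.proj Aᶜ = E.proj Aᶜ * U := by
  rw [proj_compl E hA, mul_sub, sub_mul, mul_one, one_mul, h]

lemma comm_iUnion (U : H →L[ℂ] H) (f : ℕ → Set S) (hd : Pairwise (Function.onFun Disjoint f))
    (hm : ∀ i, MeasurableSet (f i))
    (h : ∀ i, U * E.proj (f i) = E.proj (f i) * U) :
    U * E.proj (⋃ i, f i) = E.proj (⋃ i, f i) * U := by
  ext y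
  apply ext_inner_left ℂ
  intro x
  have h1 := hasSum_inner_proj E ((ContinuousLinearMap.adjoint U) x) y f hd hm
  have h2 := hasSum_inner_proj E x (U y) f hd hm
  have he : (fun n => ⟪(ContinuousLinearMap.adjoint U) x, E.proj (f n) y⟫) =
      fun n => ⟪x, E.proj (f n) (U y)⟫ := by
    funext n
    rw [ContinuousLinearMap.adjoint_inner_left]
    have h3 := congrArg (fun L : H →L[ℂ] H => L y) (h n)
    simp only [ContinuousLinearMap.mul_apply] at h3
    rw [h3]
  rw [he] at h1
  have h4 := h1.unique h2
  simp only [ContinuousLinearMap.mul_apply]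
  rw [← ContinuousLinearMap.adjoint_inner_left U]
  exact h4



end SpecAux

open SpecAux in
/-- If a bounded operator `U` commutes with the spectral integral `J^E_f` for every
continuous complex function `f` on a Polish space `S`, then `U` commutes with every
spectral projection `E(A)`, `A` Borel. -/

theorem commutes_with_spectral_projections
    {S : Type*} [TopologicalSpace S] [PolishSpace S] [MeasurableSpace S] [BorelSpace S]
    (E : SpectralMeasure S H) (U : H →L[ℂ] H)
    (hU : ∀ f : S → ℂ, Continuous f → ∀ T : H →ₗ.[ℂ] H,
      IsSpectralIntegralOf E f T → CommutesWith U T) :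
    ∀ A : Set S, MeasurableSet A → U * E.proj A = E.proj A * U := by
  classical
  have key : ∀ g : S → ℝ, Continuous g → (∀ s, 0 ≤ g s) → (∀ s, g s ≤ 1) →
      ∀ x y : H, Bf E g ((ContinuousLinearMap.adjoint U) x) y = Bf E g x (U y) := by
    intro g hgc hg0 hg1 x y
    have hgi : ∀ z : H, Integrable g (E.meas z) := fun z =>
      Integrable.mono' (integrable_const 1) hgc.aestronglyMeasurable
        (Filter.Eventually.of_forall fun s => by
          rw [Real.norm_eq_abs, abs_of_nonneg (hg0 s)]; exact hg1 s)
    obtain ⟨T, hT⟩ := exists_T E g hgi hg0 hg1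
    set Tp : H →ₗ.[ℂ] H := ⟨⊤, T.comp (Submodule.subtype ⊤)⟩ with hTpdef
    have hsp : IsSpectralIntegralOf E (fun s => ((g s : ℝ) : ℂ)) Tp := by
      constructor
      · intro ψ
        have hint : Integrable (fun s => ‖((g s : ℝ) : ℂ)‖ ^ 2) (E.meas ψ) := by
          apply Integrable.mono' (integrable_const 1)
          · exact Continuous.aestronglyMeasurable (by
              have : Continuous fun s => ‖((g s : ℝ) : ℂ)‖ :=
                (Complex.continuous_ofReal.comp hgc).norm
              exact this.pow 2)
          · filter_upwards with s
            rw [Complex.norm_real, Real.norm_eq_abs, Real.norm_eq_abs, abs_of_nonneg (by positivity)]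
            rw [sq_abs]; nlinarith [hg0 s, hg1 s]
        exact iff_of_true trivial hint
      · intro ψ
        have hψ : (Tp ψ : H) = T (ψ : H) := rfl
        rw [hψ, hT, B_diag E g hgi]
        exact (integral_ofReal (f := g) (μ := E.meas (ψ : H))).symm
    have hcomm := hU (fun s => ((g s : ℝ) : ℂ)) (Complex.continuous_ofReal.comp hgc) Tp hsp
    have hUT : ∀ z : H, U (T z) = T (U z) := by
      intro z
      obtain ⟨hmem, heq⟩ := hcomm ⟨z, trivial⟩
      exact heq
    calc Bf E g ((ContinuousLinearMap.adjoint U) x) y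
        = (inner ℂ ((ContinuousLinearMap.adjoint U) x) (T y) : ℂ) := (hT _ _).symm
      _ = (inner ℂ x (U (T y)) : ℂ) := ContinuousLinearMap.adjoint_inner_left U (T y) x
      _ = (inner ℂ x (T (U y)) : ℂ) := by rw [hUT]
      _ = Bf E g x (U y) := hT _ _
  have hclosed : ∀ F : Set S, IsClosed F → U * E.proj F = E.proj F * U := by
    intro F hF
    rcases F.eq_empty_or_nonempty with rfl | hne
    · rw [proj_empty]; simp
    letI := TopologicalSpace.upgradeIsCompletelyMetrizable S
    set g : ℕ → S → ℝ := fun n s => max (1 - n * Metric.infDist s F) 0 with hgdef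
    have hgc : ∀ n, Continuous (g n) := fun n =>
      (continuous_const.sub (continuous_const.mul (Metric.continuous_infDist_pt F))).max
        continuous_const
    have hg0 : ∀ n s, 0 ≤ g n s := fun n s => le_max_right _ _
    have hg1 : ∀ n s, g n s ≤ 1 := fun n s =>
      max_le (by nlinarith [Metric.infDist_nonneg (x := s) (s := F), Nat.cast_nonneg (α := ℝ) n])
        zero_le_one
    have hlim : ∀ s, Filter.Tendsto (fun n => g n s) Filter.atTop
        (nhds (F.indicator (fun _ => (1 : ℝ)) s)) := by
      intro s
      by_cases hs : s ∈ F
      · rw [Set.indicator_of_mem hs]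
        have hone : ∀ n : ℕ, g n s = 1 := fun n => by
          simp [hgdef, Metric.infDist_zero_of_mem hs]
        simp only [hone]
        exact tendsto_const_nhds
      · rw [Set.indicator_of_notMem hs]
        have hd : 0 < Metric.infDist s F := (hF.notMem_iff_infDist_pos hne).mp hs
        apply tendsto_atTop_of_eventually_const (i₀ := ⌈1 / Metric.infDist s F⌉₊)
        intro n hn
        simp only [hgdef]
        apply max_eq_right
        have h5 : 1 / Metric.infDist s F ≤ (n : ℝ) :=
          le_trans (Nat.le_ceil _) (by exact_mod_cast hn)
        rw [div_le_iff₀ hd] at h5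
        nlinarith
    have hq : ∀ z : H, Filter.Tendsto (fun n => qf E (g n) z) Filter.atTop
        (nhds ((E.meas z F).toReal)) := by
      intro z
      have hdc := MeasureTheory.tendsto_integral_of_dominated_convergence
        (μ := E.meas z) (F := fun n => g n) (f := F.indicator (fun _ => (1 : ℝ)))
        (bound := fun _ => 1)
        (fun n => (hgc n).aestronglyMeasurable) (integrable_const 1)
        (fun n => Filter.Eventually.of_forall fun s => by
          rw [Real.norm_eq_abs, abs_of_nonneg (hg0 n s)]; exact hg1 n s)
        (Filter.Eventually.of_forall hlim)
      have hi1 : ∫ s, F.indicator (fun _ => (1 : ℝ)) s ∂(E.meas z) = (E.meas z F).toReal := by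
        have := MeasureTheory.integral_indicator_one (μ := E.meas z) hF.measurableSet
        simpa [Pi.one_def, Measure.real] using this
      rwa [hi1] at hdc
    have hB : ∀ x y : H, Filter.Tendsto (fun n => Bf E (g n) x y) Filter.atTop
        (nhds (inner ℂ x (E.proj F y) : ℂ)) := by
      intro x y
      rw [inner_proj_polar E hF.measurableSet x y]
      have hc : ∀ z : H, Filter.Tendsto (fun n => ((qf E (g n) z : ℝ) : ℂ)) Filter.atTop
          (nhds (((E.meas z F).toReal : ℂ))) :=
        fun z => (Complex.continuous_ofReal.tendsto _).comp (hq z)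
      simp only [Bf, Pf, Complex.ofReal_sub]
      exact ((((hc (x + y)).sub (hc (x - y))).add
        (((hc (x + -(Complex.I • y))).sub (hc (x - -(Complex.I • y)))).mul_const
          Complex.I)).div_const 4)
    ext y
    apply ext_inner_left ℂ
    intro x
    have h1 := hB ((ContinuousLinearMap.adjoint U) x) y
    have h2 := hB x (U y)
    have he : (fun n => Bf E (g n) ((ContinuousLinearMap.adjoint U) x) y) =
        fun n => Bf E (g n) x (U y) :=
      funext fun n => key (g n) (hgc n) (hg0 n) (hg1 n) x y
    rw [he] at h1
    have h3 := tendsto_nhds_unique h1 h2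
    simp only [ContinuousLinearMap.mul_apply]
    rw [← ContinuousLinearMap.adjoint_inner_left U]
    exact h3
  intro A hA
  refine MeasurableSet.induction_on_open (C := fun A _ => U * E.proj A = E.proj A * U) ?_ ?_ ?_ A hA
  · intro V hV
    have h2 := comm_compl E U hV.isClosed_compl.measurableSet
      (hclosed Vᶜ hV.isClosed_compl)
    rwa [compl_compl] at h2
  · intro t ht h
    exact comm_compl E U ht h
  · intro f hd hm hi
    exact comm_iUnion E U f hd hm hi
end

section
/- Let ν and λ be σ-finite measures on S and on an interval (a,b) respectively, and let v be a (ν×λ)-measurable real function on S×(a,b) such that v(s,·) is locally square-integrable for ν-a.e. s. Suppose f(s,x) is a function such that for ν-a.e. s, x ↦ f(s,x) is twice (absolutely continuously) differentiable and solves −∂ₓ²f(s,x) + v(s,x) f(s,x) = 0, and suppose there is x₀ ∈ (a,b) such that s ↦ f(s,x₀) and s ↦ ∂ₓf(s,x₀) are ν-measurable. Then f is (ν×λ)-measurable on S×(a,b). -/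
open MeasureTheory Set

open Filter Topology

open scoped Interval

namespace SchrodAux


lemma measurable_setPrimitive {m : ℝ → ℝ} (hm : Measurable m) (c : ℝ) :
    Measurable fun t => ∫ u in Ioc c t, m u := by
  have h : (fun t => ∫ u in Ioc c t, m u)
      = fun t => ∫ u, (fun p : ℝ × ℝ => if c < p.2 ∧ p.2 ≤ p.1 then m p.2 else 0) (t, u) := by
    funext t
    rw [← integral_indicator measurableSet_Ioc]
    simp only [indicator_apply, mem_Ioc]
  rw [h]
  have hF : StronglyMeasurable (fun p : ℝ × ℝ => if c < p.2 ∧ p.2 ≤ p.1 then m p.2 else 0) := by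
    refine Measurable.stronglyMeasurable ?_
    exact Measurable.ite ((measurableSet_lt measurable_const measurable_snd).inter
      (measurableSet_le measurable_snd measurable_fst)) (hm.comp measurable_snd) measurable_const
  exact hF.integral_prod_right'.measurable

lemma key_right {m : ℝ → ℝ} (hmm : Measurable m) (hm0 : ∀ t, 0 ≤ m t) (c : ℝ) :
    ∀ (n : ℕ) (d : ℝ), IntegrableOn m (Ioc c d) →
    ∫ t in Ioc c d, m t * (∫ u in Ioc c t, m u) ^ n
      = (∫ u in Ioc c d, m u) ^ (n + 1) / ((n : ℝ) + 1) := by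
  intro n
  induction n with
  | zero => intro d _; simp
  | succ n IH =>
    intro d hint
    set A : ℝ → ℝ := fun t => ∫ u in Ioc c t, m u with hA
    have hAmeas : Measurable A := measurable_setPrimitive hmm c
    have hA0 : ∀ t, 0 ≤ A t := fun t => setIntegral_nonneg measurableSet_Ioc fun u _ => hm0 u
    have hAle : ∀ t, t ≤ d → A t ≤ A d := fun t ht =>
      setIntegral_mono_set hint (Eventually.of_forall fun u => hm0 u)
        (HasSubset.Subset.eventuallyLE (Ioc_subset_Ioc_right ht))
    have hmA : ∀ (k : ℕ) (e : ℝ), e ≤ d → IntegrableOn (fun t => m t * A t ^ k) (Ioc c e) := by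
      intro k e he
      have hint' : IntegrableOn m (Ioc c e) := hint.mono_set (Ioc_subset_Ioc_right he)
      refine Integrable.mono' (hint'.mul_const (A d ^ k))
        ((hmm.mul (hAmeas.pow_const k)).aestronglyMeasurable) ?_
      filter_upwards [ae_restrict_mem measurableSet_Ioc] with t ht
      rw [Real.norm_eq_abs, abs_of_nonneg (mul_nonneg (hm0 t) (pow_nonneg (hA0 t) k))]
      exact mul_le_mul_of_nonneg_left (pow_le_pow_left₀ (hA0 t) (hAle t (ht.2.trans he)) k) (hm0 t)
    set F : ℝ × ℝ → ℝ :=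
      fun p => if c < p.2 ∧ p.2 ≤ p.1 then m p.1 * A p.1 ^ n * m p.2 else 0 with hF
    have hFmeas : Measurable F := by
      refine Measurable.ite ((measurableSet_lt measurable_const measurable_snd).inter
        (measurableSet_le measurable_snd measurable_fst)) ?_ measurable_const
      exact ((hmm.comp measurable_fst).mul ((hAmeas.comp measurable_fst).pow_const n)).mul
        (hmm.comp measurable_snd)
    have hFint : Integrable F ((volume.restrict (Ioc c d)).prod (volume.restrict (Ioc c d))) := by
      refine Integrable.mono' (g := fun p : ℝ × ℝ => (m p.1 * A d ^ n) * m p.2)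
        ((hint.mul_const (A d ^ n)).mul_prod hint) hFmeas.aestronglyMeasurable ?_
      rw [Measure.prod_restrict]
      filter_upwards [ae_restrict_mem (measurableSet_Ioc.prod measurableSet_Ioc)] with p hp
      rcases hp with ⟨hp1, hp2⟩
      by_cases hcond : c < p.2 ∧ p.2 ≤ p.1
      · simp only [hF, if_pos hcond, Real.norm_eq_abs]
        rw [abs_of_nonneg (mul_nonneg (mul_nonneg (hm0 _) (pow_nonneg (hA0 _) n)) (hm0 _))]
        have h1 : A p.1 ^ n ≤ A d ^ n := pow_le_pow_left₀ (hA0 _) (hAle _ hp1.2) n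
        have := mul_le_mul_of_nonneg_left h1 (hm0 p.1)
        exact mul_le_mul_of_nonneg_right (by nlinarith [hm0 p.1]) (hm0 p.2)
      · simp only [hF, if_neg hcond, norm_zero]
        exact mul_nonneg (mul_nonneg (hm0 _) (pow_nonneg (hA0 _) n)) (hm0 _)
    have step1 : ∀ t ∈ Ioc c d, m t * A t ^ (n + 1) = ∫ u in Ioc c d, F (t, u) := by
      intro t ht
      have h1 : (fun u => F (t, u)) = (Ioc c t).indicator (fun u => m t * A t ^ n * m u) := by
        funext u
        simp only [hF, indicator_apply, mem_Ioc]
      rw [h1, setIntegral_indicator measurableSet_Ioc,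
        Set.inter_eq_right.mpr (Ioc_subset_Ioc_right ht.2), integral_const_mul]
      ring
    have step2 : ∀ u ∈ Ioc c d, (∫ t in Ioc c d, F (t, u))
        = ((∫ t in Ioc c d, m t * A t ^ n) - ∫ t in Ioc c u, m t * A t ^ n) * m u := by
      intro u hu
      have h1 : (fun t => F (t, u)) = (Ici u).indicator (fun t => m t * A t ^ n * m u) := by
        funext t
        simp only [hF, indicator_apply, mem_Ici, hu.1, true_and]
      have hset : Ioc c d ∩ Ici u = Icc u d := by
        ext x
        simp only [mem_inter_iff, mem_Ioc, mem_Ici, mem_Icc]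
        constructor
        · rintro ⟨⟨_, h2⟩, h3⟩; exact ⟨h3, h2⟩
        · rintro ⟨h1x, h2x⟩; exact ⟨⟨lt_of_lt_of_le hu.1 h1x, h2x⟩, h1x⟩
      rw [h1, setIntegral_indicator measurableSet_Ici, hset, integral_Icc_eq_integral_Ioc]
      have hsplit : (∫ t in Ioc c d, m t * A t ^ n)
          = (∫ t in Ioc c u, m t * A t ^ n) + ∫ t in Ioc u d, m t * A t ^ n := by
        rw [← setIntegral_union (Ioc_disjoint_Ioc_of_le le_rfl) measurableSet_Ioc
          (hmA n u hu.2) ((hmA n d le_rfl).mono_set (Ioc_subset_Ioc_left hu.1.le))]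
        rw [Ioc_union_Ioc_eq_Ioc hu.1.le hu.2]
      rw [integral_mul_const]
      have : (∫ t in Ioc u d, m t * A t ^ n)
          = (∫ t in Ioc c d, m t * A t ^ n) - ∫ t in Ioc c u, m t * A t ^ n := by
        rw [hsplit]; ring
      rw [this]
    have hswap : (∫ t in Ioc c d, ∫ u in Ioc c d, F (t, u))
        = ∫ u in Ioc c d, ∫ t in Ioc c d, F (t, u) :=
      integral_integral_swap hFint
    have h2 : (∫ t in Ioc c d, m t * A t ^ (n + 1))
        = ∫ u in Ioc c d, (∫ t in Ioc c d, F (t, u)) := by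
      rw [setIntegral_congr_fun measurableSet_Ioc (fun t ht => step1 t ht)]
      exact hswap
    have h3 : ∀ u ∈ Ioc c d, (∫ t in Ioc c d, F (t, u))
        = (A d ^ (n + 1) / ((n : ℝ) + 1)) * m u - A u ^ (n + 1) / ((n : ℝ) + 1) * m u := by
      intro u hu
      rw [step2 u hu, IH u (hint.mono_set (Ioc_subset_Ioc_right hu.2)), IH d hint]
      ring
    have int2 : Integrable (fun u => A u ^ (n + 1) / ((n : ℝ) + 1) * m u)
        (volume.restrict (Ioc c d)) := by
      have he : (fun u => A u ^ (n + 1) / ((n : ℝ) + 1) * m u)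
          = fun u => (1 / ((n : ℝ) + 1)) * (m u * A u ^ (n + 1)) := by funext u; ring
      rw [he]
      exact (hmA (n + 1) d le_rfl).const_mul _
    have h4 : (∫ u in Ioc c d, (∫ t in Ioc c d, F (t, u)))
        = (A d ^ (n + 1) / ((n : ℝ) + 1)) * A d
          - (1 / ((n : ℝ) + 1)) * ∫ u in Ioc c d, m u * A u ^ (n + 1) := by
      rw [setIntegral_congr_fun measurableSet_Ioc (fun u hu => h3 u hu)]
      rw [integral_sub (hint.const_mul _) int2]
      congr 1
      · exact integral_const_mul _ _
      · rw [← integral_const_mul]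
        congr 1; funext u; ring
    set X := ∫ t in Ioc c d, m t * A t ^ (n + 1) with hXdef
    have hEq : X = (A d ^ (n + 1) / ((n : ℝ) + 1)) * A d - (1 / ((n : ℝ) + 1)) * X :=
      h2.trans h4
    have hne : ((n : ℝ) + 1) ≠ 0 := by positivity
    have hne2 : ((n : ℝ) + 2) ≠ 0 := by positivity
    have h6 : X * ((n : ℝ) + 2) = A d ^ (n + 2) := by
      have h5 : X * ((n : ℝ) + 1) = (A d ^ (n + 1) * A d - X) := by
        conv_lhs => rw [hEq]
        field_simp
      have : A d ^ (n + 2) = A d ^ (n + 1) * A d := by ring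
      rw [this]
      nlinarith [h5]
    have hgoal : X = A d ^ (n + 2) / ((n : ℝ) + 2) := by
      rw [← h6, mul_div_assoc, div_self hne2, mul_one]
    have hAd : (∫ u in Ioc c d, m u) = A d := rfl
    rw [hgoal, hAd]
    push_cast
    ring



lemma measurable_setPrimitive_left {m : ℝ → ℝ} (hm : Measurable m) (d : ℝ) :
    Measurable fun t => ∫ u in Ioc t d, m u := by
  have h : (fun t => ∫ u in Ioc t d, m u)
      = fun t => ∫ u, (fun p : ℝ × ℝ => if p.1 < p.2 ∧ p.2 ≤ d then m p.2 else 0) (t, u) := by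
    funext t
    rw [← integral_indicator measurableSet_Ioc]
    simp only [indicator_apply, mem_Ioc]
  rw [h]
  have hF : StronglyMeasurable (fun p : ℝ × ℝ => if p.1 < p.2 ∧ p.2 ≤ d then m p.2 else 0) := by
    refine Measurable.stronglyMeasurable ?_
    exact Measurable.ite ((measurableSet_lt measurable_fst measurable_snd).inter
      (measurableSet_le measurable_snd measurable_const)) (hm.comp measurable_snd) measurable_const
  exact hF.integral_prod_right'.measurable

lemma key_left {m : ℝ → ℝ} (hmm : Measurable m) (hm0 : ∀ t, 0 ≤ m t) (d : ℝ) :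
    ∀ (n : ℕ) (c : ℝ), IntegrableOn m (Ioc c d) →
    ∫ t in Ioc c d, m t * (∫ u in Ioc t d, m u) ^ n
      = (∫ u in Ioc c d, m u) ^ (n + 1) / ((n : ℝ) + 1) := by
  intro n
  induction n with
  | zero => intro c _; simp
  | succ n IH =>
    intro c hint
    set B : ℝ → ℝ := fun t => ∫ u in Ioc t d, m u with hB
    have hBmeas : Measurable B := measurable_setPrimitive_left hmm d
    have hB0 : ∀ t, 0 ≤ B t := fun t => setIntegral_nonneg measurableSet_Ioc fun u _ => hm0 u
    have hBle : ∀ t, c ≤ t → B t ≤ B c := fun t ht =>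
      setIntegral_mono_set hint (Eventually.of_forall fun u => hm0 u)
        (HasSubset.Subset.eventuallyLE (Ioc_subset_Ioc_left ht))
    have hmB : ∀ (k : ℕ) (e : ℝ), c ≤ e → IntegrableOn (fun t => m t * B t ^ k) (Ioc e d) := by
      intro k e he
      have hint' : IntegrableOn m (Ioc e d) := hint.mono_set (Ioc_subset_Ioc_left he)
      refine Integrable.mono' (hint'.mul_const (B c ^ k))
        ((hmm.mul (hBmeas.pow_const k)).aestronglyMeasurable) ?_
      filter_upwards [ae_restrict_mem measurableSet_Ioc] with t ht
      rw [Real.norm_eq_abs, abs_of_nonneg (mul_nonneg (hm0 t) (pow_nonneg (hB0 t) k))]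
      exact mul_le_mul_of_nonneg_left
        (pow_le_pow_left₀ (hB0 t) (hBle t (he.trans ht.1.le)) k) (hm0 t)
    set F : ℝ × ℝ → ℝ :=
      fun p => if p.1 < p.2 ∧ p.2 ≤ d then m p.1 * B p.1 ^ n * m p.2 else 0 with hF
    have hFmeas : Measurable F := by
      refine Measurable.ite ((measurableSet_lt measurable_fst measurable_snd).inter
        (measurableSet_le measurable_snd measurable_const)) ?_ measurable_const
      exact ((hmm.comp measurable_fst).mul ((hBmeas.comp measurable_fst).pow_const n)).mul
        (hmm.comp measurable_snd)
    have hFint : Integrable F ((volume.restrict (Ioc c d)).prod (volume.restrict (Ioc c d))) := by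
      refine Integrable.mono' (g := fun p : ℝ × ℝ => (m p.1 * B c ^ n) * m p.2)
        ((hint.mul_const (B c ^ n)).mul_prod hint) hFmeas.aestronglyMeasurable ?_
      rw [Measure.prod_restrict]
      filter_upwards [ae_restrict_mem (measurableSet_Ioc.prod measurableSet_Ioc)] with p hp
      rcases hp with ⟨hp1, hp2⟩
      by_cases hcond : p.1 < p.2 ∧ p.2 ≤ d
      · simp only [hF, if_pos hcond, Real.norm_eq_abs]
        rw [abs_of_nonneg (mul_nonneg (mul_nonneg (hm0 _) (pow_nonneg (hB0 _) n)) (hm0 _))]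
        have h1 : B p.1 ^ n ≤ B c ^ n := pow_le_pow_left₀ (hB0 _) (hBle _ hp1.1.le) n
        have := mul_le_mul_of_nonneg_left h1 (hm0 p.1)
        exact mul_le_mul_of_nonneg_right (by nlinarith [hm0 p.1]) (hm0 p.2)
      · simp only [hF, if_neg hcond, norm_zero]
        exact mul_nonneg (mul_nonneg (hm0 _) (pow_nonneg (hB0 _) n)) (hm0 _)
    have step1 : ∀ t ∈ Ioc c d, m t * B t ^ (n + 1) = ∫ u in Ioc c d, F (t, u) := by
      intro t ht
      have h1 : (fun u => F (t, u)) = (Ioc t d).indicator (fun u => m t * B t ^ n * m u) := by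
        funext u
        simp only [hF, indicator_apply, mem_Ioc]
      rw [h1, setIntegral_indicator measurableSet_Ioc,
        Set.inter_eq_right.mpr (Ioc_subset_Ioc_left ht.1.le), integral_const_mul]
      ring
    have step2 : ∀ u ∈ Ioc c d, (∫ t in Ioc c d, F (t, u))
        = ((∫ t in Ioc c d, m t * B t ^ n) - ∫ t in Ioc u d, m t * B t ^ n) * m u := by
      intro u hu
      have h1 : (fun t => F (t, u)) = (Iio u).indicator (fun t => m t * B t ^ n * m u) := by
        funext t
        simp only [hF, indicator_apply, mem_Iio, hu.2, and_true]
      have hset : Ioc c d ∩ Iio u = Ioo c u := by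
        ext x
        simp only [mem_inter_iff, mem_Ioc, mem_Iio, mem_Ioo]
        constructor
        · rintro ⟨⟨h1x, _⟩, h3x⟩; exact ⟨h1x, h3x⟩
        · rintro ⟨h1x, h2x⟩; exact ⟨⟨h1x, (h2x.le.trans hu.2)⟩, h2x⟩
      rw [h1, setIntegral_indicator measurableSet_Iio, hset, ← integral_Ioc_eq_integral_Ioo]
      have hsplit : (∫ t in Ioc c d, m t * B t ^ n)
          = (∫ t in Ioc c u, m t * B t ^ n) + ∫ t in Ioc u d, m t * B t ^ n := by
        rw [← setIntegral_union (Ioc_disjoint_Ioc_of_le le_rfl) measurableSet_Ioc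
          ((hmB n c le_rfl).mono_set (Ioc_subset_Ioc_right hu.2)) (hmB n u hu.1.le)]
        rw [Ioc_union_Ioc_eq_Ioc hu.1.le hu.2]
      rw [integral_mul_const]
      have : (∫ t in Ioc c u, m t * B t ^ n)
          = (∫ t in Ioc c d, m t * B t ^ n) - ∫ t in Ioc u d, m t * B t ^ n := by
        rw [hsplit]; ring
      rw [this]
    have hswap : (∫ t in Ioc c d, ∫ u in Ioc c d, F (t, u))
        = ∫ u in Ioc c d, ∫ t in Ioc c d, F (t, u) :=
      integral_integral_swap hFint
    have h2 : (∫ t in Ioc c d, m t * B t ^ (n + 1))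
        = ∫ u in Ioc c d, (∫ t in Ioc c d, F (t, u)) := by
      rw [setIntegral_congr_fun measurableSet_Ioc (fun t ht => step1 t ht)]
      exact hswap
    have h3 : ∀ u ∈ Ioc c d, (∫ t in Ioc c d, F (t, u))
        = (B c ^ (n + 1) / ((n : ℝ) + 1)) * m u - B u ^ (n + 1) / ((n : ℝ) + 1) * m u := by
      intro u hu
      rw [step2 u hu, IH u (hint.mono_set (Ioc_subset_Ioc_left hu.1.le)), IH c hint]
      ring
    have int2 : Integrable (fun u => B u ^ (n + 1) / ((n : ℝ) + 1) * m u)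
        (volume.restrict (Ioc c d)) := by
      have he : (fun u => B u ^ (n + 1) / ((n : ℝ) + 1) * m u)
          = fun u => (1 / ((n : ℝ) + 1)) * (m u * B u ^ (n + 1)) := by funext u; ring
      rw [he]
      exact (hmB (n + 1) c le_rfl).const_mul _
    have h4 : (∫ u in Ioc c d, (∫ t in Ioc c d, F (t, u)))
        = (B c ^ (n + 1) / ((n : ℝ) + 1)) * B c
          - (1 / ((n : ℝ) + 1)) * ∫ u in Ioc c d, m u * B u ^ (n + 1) := by
      rw [setIntegral_congr_fun measurableSet_Ioc (fun u hu => h3 u hu)]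
      rw [integral_sub (hint.const_mul _) int2]
      congr 1
      · exact integral_const_mul _ _
      · rw [← integral_const_mul]
        congr 1; funext u; ring
    set X := ∫ t in Ioc c d, m t * B t ^ (n + 1) with hXdef
    have hEq : X = (B c ^ (n + 1) / ((n : ℝ) + 1)) * B c - (1 / ((n : ℝ) + 1)) * X :=
      h2.trans h4
    have hne : ((n : ℝ) + 1) ≠ 0 := by positivity
    have hne2 : ((n : ℝ) + 2) ≠ 0 := by positivity
    have h6 : X * ((n : ℝ) + 2) = B c ^ (n + 2) := by
      have h5 : X * ((n : ℝ) + 1) = (B c ^ (n + 1) * B c - X) := by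
        conv_lhs => rw [hEq]
        field_simp
      have : B c ^ (n + 2) = B c ^ (n + 1) * B c := by ring
      rw [this]
      nlinarith [h5]
    have hgoal : X = B c ^ (n + 2) / ((n : ℝ) + 2) := by
      rw [← h6, mul_div_assoc, div_self hne2, mul_one]
    have hBc : (∫ u in Ioc c d, m u) = B c := rfl
    rw [hgoal, hBc]
    push_cast
    ring



lemma key_uIoc {m : ℝ → ℝ} (hmm : Measurable m) (hm0 : ∀ t, 0 ≤ m t) (x₀ y : ℝ)
    (hint : IntegrableOn m (Ι x₀ y)) (n : ℕ) :
    ∫ t in Ι x₀ y, m t * (∫ u in Ι x₀ t, m u) ^ n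
      = (∫ u in Ι x₀ y, m u) ^ (n + 1) / ((n : ℝ) + 1) := by
  rcases le_total x₀ y with h | h
  · rw [uIoc_of_le h] at hint ⊢
    have hcg : ∀ t ∈ Ioc x₀ y, m t * (∫ u in Ι x₀ t, m u) ^ n
        = m t * (∫ u in Ioc x₀ t, m u) ^ n := by
      intro t ht; rw [uIoc_of_le ht.1.le]
    rw [setIntegral_congr_fun measurableSet_Ioc hcg]
    exact key_right hmm hm0 x₀ n y hint
  · rw [uIoc_of_ge h] at hint ⊢
    have hcg : ∀ t ∈ Ioc y x₀, m t * (∫ u in Ι x₀ t, m u) ^ n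
        = m t * (∫ u in Ioc t x₀, m u) ^ n := by
      intro t ht; rw [uIoc_of_ge ht.2]
    rw [setIntegral_congr_fun measurableSet_Ioc hcg]
    exact key_left hmm hm0 x₀ n y hint

variable {S : Type*} [MeasurableSpace S]

lemma sm_param_intervalIntegral {g : S × ℝ → ℂ} (hg : StronglyMeasurable g) (x₀ : ℝ) :
    StronglyMeasurable (fun p : S × ℝ => ∫ t in x₀..p.2, g (p.1, t)) := by
  have hrepr : (fun p : S × ℝ => ∫ t in x₀..p.2, g (p.1, t))
      = fun p => (∫ t, (fun q : (S × ℝ) × ℝ =>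
            if x₀ < q.2 ∧ q.2 ≤ q.1.2 then g (q.1.1, q.2) else 0) (p, t))
        - ∫ t, (fun q : (S × ℝ) × ℝ =>
            if q.1.2 < q.2 ∧ q.2 ≤ x₀ then g (q.1.1, q.2) else 0) (p, t) := by
    funext p
    rw [intervalIntegral]
    congr 1
    · rw [← integral_indicator measurableSet_Ioc]
      simp only [indicator_apply, mem_Ioc]
    · rw [← integral_indicator measurableSet_Ioc]
      simp only [indicator_apply, mem_Ioc]
  rw [hrepr]
  have hmap : Measurable (fun q : (S × ℝ) × ℝ => (q.1.1, q.2)) :=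
    (measurable_fst.fst).prodMk measurable_snd
  have h1 : StronglyMeasurable (fun q : (S × ℝ) × ℝ =>
      if x₀ < q.2 ∧ q.2 ≤ q.1.2 then g (q.1.1, q.2) else 0) := by
    refine StronglyMeasurable.ite ?_ (hg.comp_measurable hmap) stronglyMeasurable_const
    exact (measurableSet_lt measurable_const measurable_snd).inter
      (measurableSet_le measurable_snd (measurable_fst.snd))
  have h2 : StronglyMeasurable (fun q : (S × ℝ) × ℝ =>
      if q.1.2 < q.2 ∧ q.2 ≤ x₀ then g (q.1.1, q.2) else 0) := by
    refine StronglyMeasurable.ite ?_ (hg.comp_measurable hmap) stronglyMeasurable_const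
    exact (measurableSet_lt (measurable_fst.snd) measurable_snd).inter
      (measurableSet_le measurable_snd measurable_const)
  exact h1.integral_prod_right'.sub h2.integral_prod_right'

noncomputable def picard (W : S × ℝ → ℝ) (f₀ f₁ : S → ℂ) (x₀ : ℝ) : ℕ → S × ℝ → ℂ × ℂ
  | 0 => fun p => (f₀ p.1, f₁ p.1)
  | n + 1 => fun p =>
      (f₀ p.1 + ∫ t in x₀..p.2, (picard W f₀ f₁ x₀ n (p.1, t)).2,
       f₁ p.1 + ∫ t in x₀..p.2, (W (p.1, t) : ℂ) * (picard W f₀ f₁ x₀ n (p.1, t)).1)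

lemma picard_sm {W : S × ℝ → ℝ} {f₀ f₁ : S → ℂ} {x₀ : ℝ}
    (hW : StronglyMeasurable W) (h0 : Measurable f₀) (h1 : Measurable f₁) (n : ℕ) :
    StronglyMeasurable (picard W f₀ f₁ x₀ n) := by
  induction n with
  | zero =>
    exact ((h0.comp measurable_fst).stronglyMeasurable).prodMk
      ((h1.comp measurable_fst).stronglyMeasurable)
  | succ n IH =>
    have hsnd : StronglyMeasurable (fun q : S × ℝ => (picard W f₀ f₁ x₀ n q).2) :=
      continuous_snd.comp_stronglyMeasurable IH
    have hfst : StronglyMeasurable (fun q : S × ℝ => (picard W f₀ f₁ x₀ n q).1) :=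
      continuous_fst.comp_stronglyMeasurable IH
    have hmul : StronglyMeasurable (fun q : S × ℝ => (W q : ℂ) * (picard W f₀ f₁ x₀ n q).1) :=
      (Complex.continuous_ofReal.comp_stronglyMeasurable hW).mul hfst
    exact StronglyMeasurable.prodMk
      (((h0.comp measurable_fst).stronglyMeasurable).add (sm_param_intervalIntegral hsnd x₀))
      (((h1.comp measurable_fst).stronglyMeasurable).add (sm_param_intervalIntegral hmul x₀))

lemma picard_conv
    (a b x₀ x1 : ℝ) (hx₀ : x₀ ∈ Ioo a b) (hx1 : x1 ∈ Ioo a b)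
    (V : ℝ → ℝ) (hVmeas : Measurable V)
    (F G : ℝ → ℂ)
    (hderiv : ∀ x ∈ Ioo a b, HasDerivAt F (G x) x)
    (hodeV : ∀ x ∈ Ioo a b, G x = G x₀ + ∫ t in x₀..x, (V t : ℂ) * F t)
    (hVint : IntegrableOn V (uIcc x₀ x1))
    (p q : ℕ → ℝ → ℂ)
    (hp0 : ∀ y, p 0 y = F x₀) (hq0 : ∀ y, q 0 y = G x₀)
    (hps : ∀ n y, p (n + 1) y = F x₀ + ∫ t in x₀..y, q n t)
    (hqs : ∀ n y, q (n + 1) y = G x₀ + ∫ t in x₀..y, (V t : ℂ) * p n t) :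
    Tendsto (fun n => p n x1) atTop (𝓝 (F x1)) := by
  set I := uIcc x₀ x1 with hI
  have hx₀I : x₀ ∈ I := left_mem_uIcc
  have hx1I : x1 ∈ I := right_mem_uIcc
  have hIoo : I ⊆ Ioo a b := (ordConnected_Ioo).uIcc_subset hx₀ hx1
  have hIcomp : IsCompact I := isCompact_uIcc
  have hImeas : MeasurableSet I := measurableSet_uIcc
  -- continuity of F on I
  have hFcont : ContinuousOn F (Ioo a b) := fun x hx =>
    (hderiv x hx).continuousAt.continuousWithinAt
  have hFI : ContinuousOn F I := hFcont.mono hIoo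
  -- the weight function m and its primitive A
  set m : ℝ → ℝ := fun t => 1 + |V t| with hm
  have hm0 : ∀ t, 0 ≤ m t := fun t => by positivity
  have hmmeas : Measurable m := measurable_const.add hVmeas.abs
  have hmint : IntegrableOn m I := by
    refine Integrable.add ?_ hVint.abs
    exact integrableOn_const hIcomp.measure_lt_top.ne
  set A : ℝ → ℝ := fun t => ∫ u in Ι x₀ t, m u with hA
  have hA0 : ∀ t, 0 ≤ A t := fun t => setIntegral_nonneg measurableSet_uIoc fun u _ => hm0 u
  have habs : ∀ t, A t = |∫ u in x₀..t, m u| := by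
    intro t
    simp only [hA]
    rcases le_total x₀ t with h | h
    · rw [uIoc_of_le h, intervalIntegral.integral_of_le h,
        abs_of_nonneg (setIntegral_nonneg measurableSet_Ioc fun u _ => hm0 u)]
    · rw [uIoc_of_ge h, intervalIntegral.integral_of_ge h, abs_neg,
        abs_of_nonneg (setIntegral_nonneg measurableSet_Ioc fun u _ => hm0 u)]
  have hAcont : ContinuousOn A I := by
    have h1 : ContinuousOn (fun t => ∫ u in x₀..t, m u) I :=
      intervalIntegral.continuousOn_primitive_interval hmint
    have h2 : (fun t => |∫ u in x₀..t, m u|) = A := by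
      funext t; rw [habs t]
    rw [← h2]
    exact h1.abs
  -- uIoc of subpoints are inside I and inside Ioo a b
  have huIoc_sub : ∀ y ∈ I, Ι x₀ y ⊆ Ι x₀ x1 := by
    intro y hy
    rcases le_total x₀ x1 with h | h
    · rw [hI, uIcc_of_le h] at hy
      rw [uIoc_of_le hy.1, uIoc_of_le h]
      exact Ioc_subset_Ioc_right hy.2
    · rw [hI, uIcc_of_ge h] at hy
      rw [uIoc_of_ge hy.2, uIoc_of_ge h]
      exact Ioc_subset_Ioc_left hy.1
  have huIcc_sub : ∀ y ∈ I, uIcc x₀ y ⊆ I := fun y hy => uIcc_subset_uIcc left_mem_uIcc hy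
  have huIoc_I : ∀ y ∈ I, Ι x₀ y ⊆ I := fun y hy =>
    (uIoc_subset_uIcc).trans (huIcc_sub y hy)
  have hAle : ∀ y ∈ I, A y ≤ A x1 := by
    intro y hy
    refine setIntegral_mono_set (hmint.mono_set (huIoc_I x1 hx1I))
      (Eventually.of_forall fun u => hm0 u)
      (HasSubset.Subset.eventuallyLE (huIoc_sub y hy))
  -- integrability of V·h for h continuous on I
  have hVmul_int : ∀ h : ℝ → ℂ, ContinuousOn h I →
      IntegrableOn (fun t => (V t : ℂ) * h t) I := by
    intro h hh
    obtain ⟨C, hC⟩ := hIcomp.exists_bound_of_continuousOn hh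
    refine Integrable.mono' (g := fun t => |V t| * C) (hVint.abs.mul_const C)
      ((Complex.measurable_ofReal.comp hVmeas).aestronglyMeasurable.mul
        (hh.aestronglyMeasurable hImeas)) ?_
    filter_upwards [ae_restrict_mem hImeas] with t ht
    rw [norm_mul, Complex.norm_real]
    exact mul_le_mul_of_nonneg_left (hC t ht) (norm_nonneg _)
  have hVFint : IntegrableOn (fun t => (V t : ℂ) * F t) I := hVmul_int F hFI
  -- G is continuous on I
  have hGrepr : ∀ y ∈ I, G y = G x₀ + ∫ t in x₀..y, (V t : ℂ) * F t := fun y hy =>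
    hodeV y (hIoo hy)
  have hGcont : ContinuousOn G I := by
    have hprim : ContinuousOn (fun y => G x₀ + ∫ t in x₀..y, (V t : ℂ) * F t) I :=
      continuousOn_const.add (intervalIntegral.continuousOn_primitive_interval hVFint)
    exact hprim.congr hGrepr
  -- fixed point identity for F
  have hFfix : ∀ y ∈ I, F y = F x₀ + ∫ t in x₀..y, G t := by
    intro y hy
    have hsub := huIcc_sub y hy
    have h1 : ∫ t in x₀..y, G t = F y - F x₀ :=
      intervalIntegral.integral_eq_sub_of_hasDerivAt
        (fun t ht => hderiv t (hIoo (hsub ht)))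
        ((hGcont.mono hsub).intervalIntegrable)
    rw [h1]; ring
  -- continuity of the iterates
  have hcont : ∀ n, ContinuousOn (p n) I ∧ ContinuousOn (q n) I := by
    intro n
    induction n with
    | zero =>
      constructor
      · exact continuousOn_const.congr fun y _ => hp0 y
      · exact continuousOn_const.congr fun y _ => hq0 y
    | succ n IH =>
      constructor
      · have hqint : IntegrableOn (q n) I := IH.2.integrableOn_compact hIcomp
        exact (continuousOn_const.add
          (intervalIntegral.continuousOn_primitive_interval hqint)).congr
          fun y _ => hps n y
      · have hpint : IntegrableOn (fun t => (V t : ℂ) * p n t) I := hVmul_int _ IH.1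
        exact (continuousOn_const.add
          (intervalIntegral.continuousOn_primitive_interval hpint)).congr
          fun y _ => hqs n y
  -- the error bound C
  have hecont : ContinuousOn (fun y => ‖F y - F x₀‖ + ‖G y - G x₀‖) I :=
    ((hFI.sub continuousOn_const).norm).add ((hGcont.sub continuousOn_const).norm)
  obtain ⟨C, hC⟩ := hIcomp.exists_bound_of_continuousOn hecont
  have hC' : ∀ y ∈ I, ‖F y - F x₀‖ + ‖G y - G x₀‖ ≤ C := by
    intro y hy
    exact (le_abs_self _).trans (le_of_eq (Real.norm_eq_abs _).symm) |>.trans (hC y hy)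
  have hC0 : 0 ≤ C := le_trans (norm_nonneg _) (hC x₀ hx₀I)
  -- the main induction
  set e : ℕ → ℝ → ℝ := fun n y => ‖F y - p n y‖ + ‖G y - q n y‖ with he
  have hmain : ∀ n, ∀ y ∈ I, e n y ≤ C * A y ^ n / (n.factorial : ℝ) := by
    intro n
    induction n with
    | zero =>
      intro y hy
      simp only [he, hp0, hq0, pow_zero, Nat.factorial_zero, Nat.cast_one, mul_one, div_one]
      exact hC' y hy
    | succ n IH =>
      intro y hy
      have hxI : uIcc x₀ y ⊆ I := huIcc_sub y hy
      have hIsub : Ι x₀ y ⊆ I := huIoc_I y hy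
      have hGIy : IntervalIntegrable G volume x₀ y := (hGcont.mono hxI).intervalIntegrable
      have hqIy : IntervalIntegrable (q n) volume x₀ y :=
        ((hcont n).2.mono hxI).intervalIntegrable
      have hVFIy : IntervalIntegrable (fun t => (V t : ℂ) * F t) volume x₀ y :=
        intervalIntegrable_iff.mpr (hVFint.mono_set hIsub)
      have hVpint : IntegrableOn (fun t => (V t : ℂ) * p n t) I := hVmul_int _ (hcont n).1
      have hVpIy : IntervalIntegrable (fun t => (V t : ℂ) * p n t) volume x₀ y :=
        intervalIntegrable_iff.mpr (hVpint.mono_set hIsub)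
      have h1 : F y - p (n + 1) y = ∫ t in x₀..y, (G t - q n t) := by
        rw [hps n y, hFfix y hy, intervalIntegral.integral_sub hGIy hqIy]; ring
      have h2 : G y - q (n + 1) y
          = ∫ t in x₀..y, ((V t : ℂ) * F t - (V t : ℂ) * p n t) := by
        rw [hqs n y, hGrepr y hy, intervalIntegral.integral_sub hVFIy hVpIy]; ring
      have hb1 : ‖F y - p (n + 1) y‖ ≤ ∫ t in Ι x₀ y, ‖G t - q n t‖ := by
        rw [h1]; exact intervalIntegral.norm_integral_le_integral_norm_uIoc
      have hb2 : ‖G y - q (n + 1) y‖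
          ≤ ∫ t in Ι x₀ y, ‖(V t : ℂ) * F t - (V t : ℂ) * p n t‖ := by
        rw [h2]; exact intervalIntegral.norm_integral_le_integral_norm_uIoc
      set Bnd : ℝ → ℝ := fun t => C * A t ^ n / (n.factorial : ℝ) with hBnd
      have hBnd_cont : ContinuousOn Bnd I :=
        (continuousOn_const.mul (hAcont.pow n)).div_const _
      have hBnd_nonneg : ∀ t, 0 ≤ Bnd t := fun t => by
        have := hA0 t
        positivity
      have hBint : IntegrableOn Bnd (Ι x₀ y) :=
        (hBnd_cont.integrableOn_compact hIcomp).mono_set hIsub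
      have hnormq_int : IntegrableOn (fun t => ‖G t - q n t‖) (Ι x₀ y) :=
        (((hGcont.sub (hcont n).2).norm).integrableOn_compact hIcomp).mono_set hIsub
      have hnormVp_int :
          IntegrableOn (fun t => ‖(V t : ℂ) * F t - (V t : ℂ) * p n t‖) (Ι x₀ y) := by
        have h := (hVFint.sub hVpint).norm
        have h2 : IntegrableOn (fun t => ‖(V t : ℂ) * F t - (V t : ℂ) * p n t‖) I := h
        exact h2.mono_set hIsub
      have hVBint : IntegrableOn (fun t => |V t| * Bnd t) (Ι x₀ y) := by
        refine IntegrableOn.mono_set ?_ hIsub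
        refine Integrable.mono' ((hVint.abs).mul_const (C * A x1 ^ n / (n.factorial : ℝ)))
          (hVmeas.abs.aestronglyMeasurable.mul
            ((hBnd_cont.aestronglyMeasurable hImeas))) ?_
        filter_upwards [ae_restrict_mem hImeas] with t ht
        rw [Real.norm_eq_abs, abs_of_nonneg (mul_nonneg (abs_nonneg _) (hBnd_nonneg t))]
        refine mul_le_mul_of_nonneg_left ?_ (abs_nonneg _)
        simp only [hBnd]
        gcongr
        all_goals first
          | exact hC0
          | exact hA0 t
          | exact hAle t ht
      have ht1 : (∫ t in Ι x₀ y, ‖G t - q n t‖) ≤ ∫ t in Ι x₀ y, Bnd t := by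
        refine setIntegral_mono_on hnormq_int hBint measurableSet_uIoc ?_
        intro t ht
        have hBt := IH t (hIsub ht)
        refine le_trans ?_ hBt
        simp only [he]
        exact le_add_of_nonneg_left (norm_nonneg _)
      have ht2 : (∫ t in Ι x₀ y, ‖(V t : ℂ) * F t - (V t : ℂ) * p n t‖)
          ≤ ∫ t in Ι x₀ y, |V t| * Bnd t := by
        refine setIntegral_mono_on hnormVp_int hVBint measurableSet_uIoc ?_
        intro t ht
        have hre : ‖(V t : ℂ) * F t - (V t : ℂ) * p n t‖ = |V t| * ‖F t - p n t‖ := by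
          rw [← mul_sub, norm_mul, Complex.norm_real, Real.norm_eq_abs]
        rw [hre]
        refine mul_le_mul_of_nonneg_left ?_ (abs_nonneg _)
        refine le_trans ?_ (IH t (hIsub ht))
        simp only [he]
        exact le_add_of_nonneg_right (norm_nonneg _)
      have hsum : e (n + 1) y ≤ ∫ t in Ι x₀ y, m t * Bnd t := by
        have hcomb : (∫ t in Ι x₀ y, Bnd t) + (∫ t in Ι x₀ y, |V t| * Bnd t)
            = ∫ t in Ι x₀ y, m t * Bnd t := by
          rw [← integral_add hBint hVBint]
          refine setIntegral_congr_fun measurableSet_uIoc ?_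
          intro t _
          simp only [hm]
          ring
        calc e (n + 1) y ≤ (∫ t in Ι x₀ y, ‖G t - q n t‖)
              + ∫ t in Ι x₀ y, ‖(V t : ℂ) * F t - (V t : ℂ) * p n t‖ :=
              add_le_add hb1 hb2
          _ ≤ (∫ t in Ι x₀ y, Bnd t) + ∫ t in Ι x₀ y, |V t| * Bnd t := add_le_add ht1 ht2
          _ = ∫ t in Ι x₀ y, m t * Bnd t := hcomb
      have hkey : (∫ t in Ι x₀ y, m t * Bnd t)
          = (C / (n.factorial : ℝ)) * (A y ^ (n + 1) / ((n : ℝ) + 1)) := by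
        have hcg : ∀ t ∈ Ι x₀ y, m t * Bnd t
            = (C / (n.factorial : ℝ)) * (m t * (∫ u in Ι x₀ t, m u) ^ n) := by
          intro t _
          simp only [hBnd, hA]
          ring
        rw [setIntegral_congr_fun measurableSet_uIoc hcg, integral_const_mul,
          key_uIoc hmmeas hm0 x₀ y (hmint.mono_set hIsub) n]
      have hfin : (C / (n.factorial : ℝ)) * (A y ^ (n + 1) / ((n : ℝ) + 1))
          = C * A y ^ (n + 1) / ((n + 1).factorial : ℝ) := by
        rw [Nat.factorial_succ]
        push_cast
        rw [div_mul_div_comm]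
        ring
      calc e (n + 1) y ≤ ∫ t in Ι x₀ y, m t * Bnd t := hsum
        _ = (C / (n.factorial : ℝ)) * (A y ^ (n + 1) / ((n : ℝ) + 1)) := hkey
        _ = C * A y ^ (n + 1) / ((n + 1).factorial : ℝ) := hfin
  -- conclusion
  have hW : Tendsto (fun n : ℕ => C * (A x1 ^ n / (n.factorial : ℝ))) atTop (𝓝 0) := by
    have := (Real.summable_pow_div_factorial (A x1)).tendsto_atTop_zero
    simpa using this.const_mul C
  have hbound : ∀ n : ℕ, ‖p n x1 - F x1‖ ≤ C * (A x1 ^ n / (n.factorial : ℝ)) := by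
    intro n
    rw [norm_sub_rev]
    calc ‖F x1 - p n x1‖ ≤ e n x1 := le_add_of_nonneg_right (norm_nonneg _)
      _ ≤ C * A x1 ^ n / (n.factorial : ℝ) := hmain n x1 hx1I
      _ = C * (A x1 ^ n / (n.factorial : ℝ)) := by ring
  have hz : Tendsto (fun n => p n x1 - F x1) atTop (𝓝 0) := squeeze_zero_norm hbound hW
  exact tendsto_sub_nhds_zero_iff.mp hz


end SchrodAux



/-- A family of solutions `f(s,·)` of the Schrödinger equation `f'' = v f` on `(a,b)`,
with jointly measurable potential `v` and measurable initial data at some `x₀`, is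
jointly measurable. -/
theorem solution_family_jointly_measurable
    {S : Type*} [MeasurableSpace S] (ν : Measure S) [SigmaFinite ν]
    (a b x₀ : ℝ) (hx₀ : x₀ ∈ Ioo a b)
    (v : S × ℝ → ℝ)
    (hv : AEStronglyMeasurable v (ν.prod (volume.restrict (Ioo a b))))
    (hvloc : ∀ᵐ s ∂ν, ∀ c d : ℝ, a < c → c ≤ d → d < b →
      IntegrableOn (fun x => (v (s, x)) ^ 2) (Icc c d))
    (f f' : S × ℝ → ℂ)
    (hode : ∀ᵐ s ∂ν,
      (∀ x ∈ Ioo a b, HasDerivAt (fun y => f (s, y)) (f' (s, x)) x) ∧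
      (∀ x ∈ Ioo a b, f' (s, x) = f' (s, x₀) + ∫ t in x₀..x, (v (s, t) : ℂ) * f (s, t)))
    (hmeas0 : AEMeasurable (fun s => f (s, x₀)) ν)
    (hmeas1 : AEMeasurable (fun s => f' (s, x₀)) ν) :
    AEStronglyMeasurable f (ν.prod (volume.restrict (Ioo a b))) := by
  classical
  have hab : a < b := lt_trans hx₀.1 hx₀.2
  set μ := ν.prod (volume.restrict (Ioo a b)) with hμ
  -- measurable versions of everything
  set V : S × ℝ → ℝ := hv.mk v with hV
  have hVsm : StronglyMeasurable V := hv.stronglyMeasurable_mk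
  have hVae : ∀ᵐ s ∂ν, ∀ᵐ t ∂(volume.restrict (Ioo a b)), v (s, t) = V (s, t) :=
    Measure.ae_ae_of_ae_prod hv.ae_eq_mk
  obtain ⟨F0, hF0m, hF0e⟩ := hmeas0
  obtain ⟨F1, hF1m, hF1e⟩ := hmeas1
  set P := SchrodAux.picard V F0 F1 x₀ with hP
  have hPsm : ∀ n, StronglyMeasurable (P n) := fun n => SchrodAux.picard_sm hVsm hF0m hF1m n
  -- Step B : pointwise-in-x measurability in s, for every x1 ∈ (a,b)
  have hB : ∀ x1 ∈ Ioo a b, AEMeasurable (fun s => f (s, x1)) ν := by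
    intro x1 hx1
    have hconv : ∀ᵐ s ∂ν, Tendsto (fun n => (P n (s, x1)).1) atTop (𝓝 (f (s, x1))) := by
      filter_upwards [hode, hvloc, hVae, hF0e, hF1e] with s h1 h2 h3 h4 h5
      have hVsmeas : Measurable (fun t => V (s, t)) :=
        hVsm.measurable.comp measurable_prodMk_left
      have h3' : ∀ᵐ t ∂volume, t ∈ Ioo a b → v (s, t) = V (s, t) :=
        (ae_restrict_iff' measurableSet_Ioo).mp h3
      have hIoo : uIcc x₀ x1 ⊆ Ioo a b := (ordConnected_Ioo).uIcc_subset hx₀ hx1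
      -- integrability of V (s, ·) on uIcc x₀ x1
      have hceq : uIcc x₀ x1 = Icc (min x₀ x1) (max x₀ x1) := rfl
      have hv2 : IntegrableOn (fun t => (v (s, t)) ^ 2) (Icc (min x₀ x1) (max x₀ x1)) :=
        h2 _ _ (lt_min hx₀.1 hx1.1) min_le_max (max_lt hx₀.2 hx1.2)
      have hIccsub : Icc (min x₀ x1) (max x₀ x1) ⊆ Ioo a b := by rw [← hceq]; exact hIoo
      have h3'' : ∀ᵐ t ∂(volume.restrict (Icc (min x₀ x1) (max x₀ x1))),
          v (s, t) = V (s, t) := by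
        filter_upwards [ae_restrict_of_ae h3', ae_restrict_mem measurableSet_Icc] with t h ht
        exact h (hIccsub ht)
      have hvsm : AEStronglyMeasurable (fun t => v (s, t))
          (volume.restrict (Icc (min x₀ x1) (max x₀ x1))) :=
        (hVsmeas.stronglyMeasurable.aestronglyMeasurable).congr
          (h3''.mono fun t ht => ht.symm)
      have hvint : IntegrableOn (fun t => v (s, t)) (Icc (min x₀ x1) (max x₀ x1)) := by
        refine Integrable.mono' (g := fun t => 1 + (v (s, t)) ^ 2)
          (Integrable.add (integrableOn_const (C := (1 : ℝ)) isCompact_Icc.measure_lt_top.ne) hv2) hvsm ?_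
        refine Eventually.of_forall fun t => ?_
        show ‖v (s, t)‖ ≤ 1 + v (s, t) ^ 2
        rw [Real.norm_eq_abs]
        nlinarith [sq_nonneg (|v (s, t)| - 1), sq_abs (v (s, t)), abs_nonneg (v (s, t))]
      have hVint : IntegrableOn (fun t => V (s, t)) (uIcc x₀ x1) := by
        rw [hceq]
        exact hvint.congr h3''
      -- the ODE written with V instead of v
      have hodeV : ∀ x ∈ Ioo a b,
          f' (s, x) = f' (s, x₀) + ∫ t in x₀..x, (V (s, t) : ℂ) * f (s, t) := by
        intro x hx
        rw [h1.2 x hx]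
        congr 1
        refine intervalIntegral.integral_congr_ae ?_
        filter_upwards [h3'] with t h ht
        have htIoo : t ∈ Ioo a b :=
          (uIoc_subset_uIcc.trans ((ordConnected_Ioo).uIcc_subset hx₀ hx)) ht
        rw [h htIoo]
      -- apply the convergence lemma
      refine SchrodAux.picard_conv a b x₀ x1 hx₀ hx1 (fun t => V (s, t)) hVsmeas
        (fun y => f (s, y)) (fun y => f' (s, y)) (fun x hx => h1.1 x hx) hodeV hVint
        (fun n y => (P n (s, y)).1) (fun n y => (P n (s, y)).2) ?_ ?_ ?_ ?_
      · intro y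
        simp only [hP, SchrodAux.picard]
        exact h4.symm
      · intro y
        simp only [hP, SchrodAux.picard]
        exact h5.symm
      · intro n y
        simp only [hP, SchrodAux.picard]
        rw [← h4]
      · intro n y
        simp only [hP, SchrodAux.picard]
        rw [← h5]
    refine aemeasurable_of_tendsto_metrizable_ae _ (fun n => ?_) hconv
    exact (((hPsm n).measurable.comp (measurable_id.prodMk measurable_const)).fst).aemeasurable
  -- countable dense family in (a, b)
  set D : Set ℝ := Ioo a b ∩ (range fun q : ℚ => (q : ℝ)) with hD
  have hDc : D.Countable := (countable_range _).mono inter_subset_right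
  have hDne : D.Nonempty := by
    obtain ⟨q, hq1, hq2⟩ := exists_rat_btwn hab
    exact ⟨(q : ℝ), ⟨hq1, hq2⟩, mem_range_self q⟩
  obtain ⟨e, he⟩ := hDc.exists_eq_range hDne
  have he1 : ∀ j, e j ∈ Ioo a b := by
    intro j
    have : e j ∈ D := by rw [he]; exact mem_range_self j
    exact this.1
  have he2 : ∀ x ∈ Ioo a b, ∀ ε : ℝ, 0 < ε → ∃ j, |e j - x| < ε := by
    intro x hx ε hε
    obtain ⟨q, hq1, hq2⟩ := exists_rat_btwn (show max a (x - ε) < x from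
      max_lt hx.1 (by linarith))
    have hqD : (q : ℝ) ∈ D :=
      ⟨⟨lt_of_le_of_lt (le_max_left _ _) hq1, hq2.trans hx.2⟩, mem_range_self q⟩
    rw [he] at hqD
    obtain ⟨j, hj⟩ := hqD
    refine ⟨j, ?_⟩
    rw [hj, abs_sub_lt_iff]
    constructor
    · linarith
    · have := lt_of_le_of_lt (le_max_right a (x - ε)) hq1
      linarith
  -- measurable versions at the dense points, and the exceptional set
  choose Fj hFjm hFje using fun j : ℕ => hB (e j) (he1 j)
  set Ncont : Set S :=
    {s | ¬ ∀ x ∈ Ioo a b, HasDerivAt (fun y => f (s, y)) (f' (s, x)) x} with hNcont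
  have hNcont_null : ν Ncont = 0 := by
    have h := hode.mono fun s hs => hs.1
    exact ae_iff.mp h
  set Nj : ℕ → Set S := fun j => {s | f (s, e j) ≠ Fj j s} with hNj
  have hNj_null : ∀ j, ν (Nj j) = 0 := fun j => ae_iff.mp (hFje j)
  set N0 : Set S := Ncont ∪ ⋃ j, Nj j with hN0def
  have hN0 : ν N0 = 0 :=
    measure_union_null hNcont_null (measure_iUnion_null hNj_null)
  set Nb := toMeasurable ν N0 with hNbdef
  have hNbm : MeasurableSet Nb := measurableSet_toMeasurable ν N0
  have hNb0 : ν Nb = 0 := by rw [hNbdef, measure_toMeasurable]; exact hN0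
  -- the modified function g
  set g : S × ℝ → ℂ := fun p => if p.1 ∈ Nb then 0 else f p with hg
  have hfg : f =ᵐ[μ] g := by
    have hsub : {p : S × ℝ | ¬ f p = g p} ⊆ Nb ×ˢ (univ : Set ℝ) := by
      intro p hp
      refine ⟨?_, trivial⟩
      by_contra hpn
      exact hp (by simp [hg, hpn])
    have hz : μ (Nb ×ˢ (univ : Set ℝ)) = 0 := by
      rw [hμ, Measure.prod_prod, hNb0, zero_mul]
    exact ae_iff.mpr (measure_mono_null hsub hz)
  have hgj : ∀ j, Measurable fun s => g (s, e j) := by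
    intro j
    have hrepr : (fun s => g (s, e j)) = fun s => if s ∈ Nb then 0 else Fj j s := by
      funext s
      by_cases hs : s ∈ Nb
      · simp [hg, hs]
      · have hs0 : s ∉ N0 := fun h => hs (subset_toMeasurable ν N0 h)
        have hsj : s ∉ Nj j := fun h => hs0 (Or.inr (mem_iUnion.mpr ⟨j, h⟩))
        have : f (s, e j) = Fj j s := not_not.mp hsj
        simp [hg, hs, this]
    rw [hrepr]
    exact Measurable.ite hNbm measurable_const (hFjm j)
  -- the approximating sequence
  have hford : ∀ (k : ℕ) (x : ℝ), ∃ j, |e j - x| < 1 / ((k : ℝ) + 1) ∨ x ∉ Ioo a b := by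
    intro k x
    by_cases hx : x ∈ Ioo a b
    · obtain ⟨j, hj⟩ := he2 x hx (1 / ((k : ℝ) + 1)) (by positivity)
      exact ⟨j, Or.inl hj⟩
    · exact ⟨0, Or.inr hx⟩
  set σ : ℕ → ℝ → ℕ := fun k x => Nat.find (hford k x) with hσ
  have hσmeas : ∀ k, Measurable (σ k) := by
    intro k
    refine measurable_find _ fun j => ?_
    have : {x : ℝ | |e j - x| < 1 / ((k : ℝ) + 1) ∨ x ∉ Ioo a b}
        = ((fun x => |e j - x|) ⁻¹' Iio (1 / ((k : ℝ) + 1))) ∪ (Ioo a b)ᶜ := by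
      ext x; simp [mem_preimage]
    rw [this]
    exact MeasurableSet.union
      (((continuous_const.sub continuous_id).abs.measurable) measurableSet_Iio)
      measurableSet_Ioo.compl
  set h : ℕ → S × ℝ → ℂ := fun k p => g (p.1, e (σ k p.2)) with hh
  have hhm : ∀ k, StronglyMeasurable (h k) := by
    intro k
    have hu : Measurable fun q : S × ℕ => g (q.1, e q.2) :=
      measurable_from_prod_countable_left fun j => hgj j
    exact (hu.comp (measurable_fst.prodMk ((hσmeas k).comp measurable_snd))).stronglyMeasurable
  have hae2 : ∀ᵐ p ∂μ, p.2 ∈ Ioo a b := by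
    have hsub : {p : S × ℝ | ¬ p.2 ∈ Ioo a b} ⊆ (univ : Set S) ×ˢ (Ioo a b)ᶜ := by
      intro p hp; exact ⟨trivial, hp⟩
    have hz : μ ((univ : Set S) ×ˢ (Ioo a b)ᶜ) = 0 := by
      rw [hμ, Measure.prod_prod, Measure.restrict_apply measurableSet_Ioo.compl,
        compl_inter_self, measure_empty, mul_zero]
    exact ae_iff.mpr (measure_mono_null hsub hz)
  have hconv : ∀ᵐ p ∂μ, Tendsto (fun k => h k p) atTop (𝓝 (g p)) := by
    filter_upwards [hae2] with p hp2
    by_cases hs : p.1 ∈ Nb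
    · have : ∀ k, h k p = 0 := fun k => by simp [hh, hg, hs]
      have hgp : g p = 0 := by simp [hg, hs]
      rw [hgp]
      simp only [this]
      exact tendsto_const_nhds
    · have hτlt : ∀ k, |e (σ k p.2) - p.2| < 1 / ((k : ℝ) + 1) := fun k =>
        (Nat.find_spec (hford k p.2)).resolve_right (not_not_intro hp2)
      have hτ : Tendsto (fun k => e (σ k p.2)) atTop (𝓝 p.2) := by
        rw [← tendsto_sub_nhds_zero_iff]
        refine squeeze_zero_norm (fun k => (hτlt k).le) ?_
        exact tendsto_one_div_add_atTop_nhds_zero_nat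
      have hder : ∀ x ∈ Ioo a b, HasDerivAt (fun y => f (p.1, y)) (f' (p.1, x)) x := by
        by_contra hcon
        exact hs (subset_toMeasurable ν N0 (Or.inl hcon))
      have hcontx : ContinuousAt (fun y => f (p.1, y)) p.2 :=
        (hder p.2 hp2).continuousAt
      have hgp : g p = f p := by simp [hg, hs]
      have hhk : ∀ k, h k p = f (p.1, e (σ k p.2)) := fun k => by simp [hh, hg, hs]
      rw [hgp]
      simp only [hhk]
      exact hcontx.tendsto.comp hτ
  have hgm : AEStronglyMeasurable g μ :=
    aestronglyMeasurable_of_tendsto_ae atTop (fun k => (hhm k).aestronglyMeasurable) hconv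
  exact hgm.congr hfg.symm
end
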